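/- arXiv:2602.06188 — 14 statements merged into one kernel-verified Lean document; each statement's English description precedes it below -/
import Mathlib

section
/- Let A be a type with a binary multiplication · and a unary operation ⁻¹, and let ⊙ be a partition function on A, i.e. a binary operation satisfying: (PF1) a ⊙ a = a; (PF2) a ⊙ (b ⊙ c) = (a ⊙ b) ⊙ c; (PF3) a ⊙ (b ⊙ c) = a ⊙ (c ⊙ b); (PF4) (a·b) ⊙ c = (a ⊙ c)·(b ⊙ c) and a⁻¹ ⊙ c = (a ⊙ c)⁻¹; (PF5) c ⊙ (a·b) = (c ⊙ a) ⊙ b and c ⊙ (a⁻¹) = c ⊙ a. Then the binary relation ~ on A defined by a ~ b if and only if a ⊙ b = a and b ⊙ a = b, is an equivalence relation. -/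
/-- Part (1) of Płonka's decomposition theorem for the signature `{·, ⁻¹}`:
if `⊙` is a partition function on `A`, then the relation
`a ~ b ↔ a ⊙ b = a ∧ b ⊙ a = b` is an equivalence relation. -/
theorem plonka_relation_equivalence {A : Type*} (mul : A → A → A) (inv : A → A)
    (odot : A → A → A)
    (PF1 : ∀ a, odot a a = a)
    (PF2 : ∀ a b c, odot a (odot b c) = odot (odot a b) c)
    (PF3 : ∀ a b c, odot a (odot b c) = odot a (odot c b))
    (PF4mul : ∀ a b c, odot (mul a b) c = mul (odot a c) (odot b c))
    (PF4inv : ∀ a c, odot (inv a) c = inv (odot a c))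
    (PF5mul : ∀ c a b, odot c (mul a b) = odot (odot c a) b)
    (PF5inv : ∀ c a, odot c (inv a) = odot c a) :
    Equivalence (fun a b => odot a b = a ∧ odot b a = b) := by
  constructor
  · intro a; exact ⟨PF1 a, PF1 a⟩
  · intro a b ⟨h1, h2⟩; exact ⟨h2, h1⟩
  · intro a b c ⟨hab, hba⟩ ⟨hbc, hcb⟩
    constructor
    · calc odot a c = odot (odot a b) c := by rw [hab]
        _ = odot a (odot b c) := (PF2 a b c).symm
        _ = a := by rw [hbc, hab]
    · calc odot c a = odot (odot c b) a := by rw [hcb]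
        _ = odot c (odot b a) := (PF2 c b a).symm
        _ = c := by rw [hba, hcb]
end

section
/- Let A be a type with a binary multiplication · and a unary operation ⁻¹, and let ⊙ be a partition function on A (a binary operation satisfying PF1–PF5). Let ~ be the relation defined by a ~ b iff a ⊙ b = a and b ⊙ a = b. Then: (i) ~ is compatible with ⊙, i.e. if a ~ a' and b ~ b' then (a ⊙ b) ~ (a' ⊙ b'); (ii) a ⊙ b ~ b ⊙ a for all a, b; (iii) a ⊙ (b ⊙ c) = (a ⊙ b) ⊙ c and a ⊙ a = a. Consequently the quotient A/~ with the induced operation [a] ⊔ [b] := [a ⊙ b] is a well-defined commutative, associative and idempotent binary operation, i.e. A/~ is a join-semilattice. -/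
/-- Part (2) of Płonka's decomposition theorem for the signature `{·, ⁻¹}`:
the relation `~` is compatible with `⊙`, `a ⊙ b ~ b ⊙ a`, `⊙` is associative and
idempotent, and consequently the quotient `A/~` with `[a] ⊔ [b] := [a ⊙ b]` is a
well-defined commutative, associative, idempotent operation (a join-semilattice). -/
theorem plonka_quotient_semilattice {A : Type*} (mul : A → A → A) (inv : A → A)
    (odot : A → A → A)
    (PF1 : ∀ a, odot a a = a)
    (PF2 : ∀ a b c, odot a (odot b c) = odot (odot a b) c)
    (PF3 : ∀ a b c, odot a (odot b c) = odot a (odot c b))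
    (PF4mul : ∀ a b c, odot (mul a b) c = mul (odot a c) (odot b c))
    (PF4inv : ∀ a c, odot (inv a) c = inv (odot a c))
    (PF5mul : ∀ c a b, odot c (mul a b) = odot (odot c a) b)
    (PF5inv : ∀ c a, odot c (inv a) = odot c a) :
    -- (i) ~ is compatible with ⊙
    (∀ a a' b b', (odot a a' = a ∧ odot a' a = a') → (odot b b' = b ∧ odot b' b = b') →
      (odot (odot a b) (odot a' b') = odot a b ∧ odot (odot a' b') (odot a b) = odot a' b')) ∧
    -- (ii) a ⊙ b ~ b ⊙ a
    (∀ a b, odot (odot a b) (odot b a) = odot a b ∧ odot (odot b a) (odot a b) = odot b a) ∧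
    -- (iii) associativity and idempotency of ⊙
    (∀ a b c, odot a (odot b c) = odot (odot a b) c) ∧ (∀ a, odot a a = a) ∧
    -- consequently: the quotient is a join-semilattice
    (∃ s : Setoid A, (∀ a b, s.r a b ↔ (odot a b = a ∧ odot b a = b)) ∧
      ∃ join : Quotient s → Quotient s → Quotient s,
        (∀ a b, join (Quotient.mk s a) (Quotient.mk s b) = Quotient.mk s (odot a b)) ∧
        (∀ x y, join x y = join y x) ∧
        (∀ x y z, join x (join y z) = join (join x y) z) ∧
        (∀ x, join x x = x)) := by
  -- right-argument commutation: (a⊙b)⊙c = (a⊙c)⊙b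
  have rcomm : ∀ a b c, odot (odot a b) c = odot (odot a c) b := by
    intro a b c
    rw [← PF2, PF3, PF2]
  -- compatibility
  have compat : ∀ a a' b b', (odot a a' = a ∧ odot a' a = a') →
      (odot b b' = b ∧ odot b' b = b') →
      (odot (odot a b) (odot a' b') = odot a b ∧
        odot (odot a' b') (odot a b) = odot a' b') := by
    have key : ∀ a a' b b', odot a a' = a → odot b b' = b →
        odot (odot a b) (odot a' b') = odot a b := by
      intro a a' b b' ha hb
      calc odot (odot a b) (odot a' b')
          = odot (odot (odot a b) a') b' := (PF2 _ _ _)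
        _ = odot (odot (odot a a') b) b' := by rw [rcomm a b a']
        _ = odot (odot a b) b' := by rw [ha]
        _ = odot a (odot b b') := (PF2 _ _ _).symm
        _ = odot a b := by rw [hb]
    intro a a' b b' ha hb
    exact ⟨key a a' b b' ha.1 hb.1, key a' a b' b ha.2 hb.2⟩
  have comm : ∀ a b, odot (odot a b) (odot b a) = odot a b ∧
      odot (odot b a) (odot a b) = odot b a := by
    have key : ∀ a b, odot (odot a b) (odot b a) = odot a b := by
      intro a b
      calc odot (odot a b) (odot b a)
          = odot (odot (odot a b) b) a := (PF2 _ _ _)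
        _ = odot (odot a (odot b b)) a := by rw [← PF2 a b b]
        _ = odot (odot a b) a := by rw [PF1]
        _ = odot (odot a a) b := by rw [rcomm]
        _ = odot a b := by rw [PF1]
    intro a b; exact ⟨key a b, key b a⟩
  refine ⟨compat, comm, PF2, PF1, ?_⟩
  -- the setoid
  have hrefl : ∀ a, odot a a = a ∧ odot a a = a := fun a => ⟨PF1 a, PF1 a⟩
  have htrans : ∀ {a b c}, (odot a b = a ∧ odot b a = b) →
      (odot b c = b ∧ odot c b = c) → (odot a c = a ∧ odot c a = c) := by
    rintro a b c ⟨hab, hba⟩ ⟨hbc, hcb⟩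
    constructor
    · calc odot a c = odot (odot a b) c := by rw [hab]
        _ = odot a (odot b c) := by rw [← PF2]
        _ = odot a b := by rw [hbc]
        _ = a := hab
    · calc odot c a = odot (odot c b) a := by rw [hcb]
        _ = odot c (odot b a) := by rw [← PF2]
        _ = odot c b := by rw [hba]
        _ = c := hcb
  let s : Setoid A := ⟨fun a b => odot a b = a ∧ odot b a = b,
    ⟨hrefl, fun h => ⟨h.2, h.1⟩, htrans⟩⟩
  refine ⟨s, fun a b => Iff.rfl, ?_⟩
  let join : Quotient s → Quotient s → Quotient s :=
    Quotient.map₂ odot (fun a a' ha b b' hb => compat a a' b b' ha hb)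
  refine ⟨join, fun a b => rfl, ?_, ?_, ?_⟩
  · intro x y
    induction x using Quotient.ind
    induction y using Quotient.ind
    exact Quotient.sound (comm _ _)
  · intro x y z
    induction x using Quotient.ind
    induction y using Quotient.ind
    induction z using Quotient.ind
    exact congrArg (Quotient.mk s) (PF2 _ _ _)
  · intro x
    induction x using Quotient.ind
    exact congrArg (Quotient.mk s) (PF1 _)
end

section
/- Let B be a type with binary operations ∨ and ∧, a unary operation ¬, and constants 0 and 1 satisfying: (1) x∨x = x; (2) x∨y = y∨x; (3) x∨(y∨z) = (x∨y)∨z; (4) ¬¬x = x; (5) x∧y = ¬(¬x ∨ ¬y); (6) x∧(¬x ∨ y) = x∧y; (7) 0∨x = x; (8) 1 = ¬0, together with the absorption identity x = x ∨ (x ∧ y). Then B admits a Boolean algebra structure whose join is ∨, whose meet is ∧, whose complement is ¬, whose least element is 0 and whose greatest element is 1. -/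
/-- Adding the absorption identity `x = x ∨ (x ∧ y)` to the involutive bisemilattice
axioms (1)–(8) yields an equational basis for Boolean algebras: such a type admits a
Boolean algebra structure with the given join, meet, complement, bottom and top. -/
theorem involutive_bisemilattice_plus_absorption_is_boolean {B : Type*}
    (join meet : B → B → B) (neg : B → B) (zero one : B)
    (h1 : ∀ x, join x x = x)
    (h2 : ∀ x y, join x y = join y x)
    (h3 : ∀ x y z, join x (join y z) = join (join x y) z)
    (h4 : ∀ x, neg (neg x) = x)
    (h5 : ∀ x y, meet x y = neg (join (neg x) (neg y)))
    (h6 : ∀ x y, meet x (join (neg x) y) = meet x y)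
    (h7 : ∀ x, join zero x = x)
    (h8 : one = neg zero)
    (habs : ∀ x y, x = join x (meet x y)) :
    ∃ ba : BooleanAlgebra B,
      (∀ x y : B, (letI := ba; x ⊔ y) = join x y) ∧
      (∀ x y : B, (letI := ba; x ⊓ y) = meet x y) ∧
      (∀ x : B, (letI := ba; xᶜ) = neg x) ∧
      ((letI := ba; (⊥ : B)) = zero) ∧
      ((letI := ba; (⊤ : B)) = one) := by
  -- De Morgan laws
  have nj : ∀ x y, neg (join x y) = meet (neg x) (neg y) := fun x y => by
    rw [h5, h4, h4]
  have nm : ∀ x y, neg (meet x y) = join (neg x) (neg y) := fun x y => by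
    rw [h5 x y, h4]
  -- meet is a semilattice operation
  have mcomm : ∀ x y, meet x y = meet y x := fun x y => by rw [h5, h5, h2]
  have massoc : ∀ x y z, meet x (meet y z) = meet (meet x y) z := fun x y z => by
    rw [h5 x (meet y z), nm, h3, ← nm, ← h5]
  have midem : ∀ x, meet x x = x := fun x => by rw [h5, h1, h4]
  have mlidem : ∀ p q, meet p (meet p q) = meet p q := fun p q => by rw [massoc, midem]
  -- absorption laws
  have habs1 : ∀ x y, join x (meet x y) = x := fun x y => (habs x y).symm
  have habs2 : ∀ x y, meet x (join x y) = x := fun x y => by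
    have t := habs (neg x) (neg y)
    calc meet x (join x y) = neg (join (neg x) (neg (join x y))) := h5 _ _
      _ = neg (join (neg x) (meet (neg x) (neg y))) := by rw [nj x y]
      _ = neg (neg x) := by rw [← t]
      _ = x := h4 x
  -- top and bottom laws
  have m1 : ∀ x, meet one x = x := fun x => by rw [h5, h8, h4, h7, h4]
  have j1 : ∀ x, join one x = one := fun x => by
    have t := habs one x
    rw [m1] at t
    exact t.symm
  have m0 : ∀ x, meet zero x = zero := fun x => by rw [h5, ← h8, j1, h8, h4]
  have m0' : ∀ x, meet x zero = zero := fun x => (mcomm x zero).trans (m0 x)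
  -- complementation
  have mneg : ∀ x, meet x (neg x) = zero := fun x => by
    calc meet x (neg x) = meet x (join (neg x) zero) := by rw [h2 (neg x) zero, h7]
      _ = meet x zero := h6 x zero
      _ = zero := m0' x
  have jneg : ∀ x, join x (neg x) = one := fun x => by
    have t := congrArg neg (mneg x)
    rw [nm, h4] at t
    rw [h2, t, h8]
  -- order translation helpers
  have sup_of_meet : ∀ p q, meet p q = p → join p q = q := fun p q h => by
    have hp : meet q p = p := (mcomm q p).trans h
    calc join p q = join q p := h2 p q
      _ = join q (meet q p) := by rw [hp]
      _ = q := habs1 q p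
  have meet_of_sup : ∀ p q, join p q = q → meet p q = p := fun p q h => by
    calc meet p q = meet p (join p q) := by rw [h]
      _ = p := habs2 p q
  -- orthomodularity
  have om : ∀ a b, meet a b = a → join a (meet b (neg a)) = b := fun a b h => by
    have k := h6 (neg a) (neg b)
    rw [h4] at k
    have jb : join a b = b := sup_of_meet a b h
    have key : neg (join a (meet b (neg a))) = neg b := by
      calc neg (join a (meet b (neg a)))
          = meet (neg a) (neg (meet b (neg a))) := nj _ _
        _ = meet (neg a) (join (neg b) (neg (neg a))) := by rw [nm]
        _ = meet (neg a) (join a (neg b)) := by rw [h4, h2]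
        _ = meet (neg a) (neg b) := k
        _ = neg (join a b) := (nj a b).symm
        _ = neg b := by rw [jb]
    have t := congrArg neg key
    rw [h4, h4] at t
    exact t
  -- AC instances for `ac_rfl`
  haveI : Std.Associative meet := ⟨fun a b c => (massoc a b c).symm⟩
  haveI : Std.Commutative meet := ⟨mcomm⟩
  haveI : Std.Associative join := ⟨fun a b c => (h3 a b c).symm⟩
  haveI : Std.Commutative join := ⟨h2⟩
  -- distributivity
  have distrib : ∀ x y z, meet x (join y z) = join (meet x y) (meet x z) := by
    intro x y z
    have e1 : meet (meet x (join y z)) (meet x y) = meet x y := by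
      calc meet (meet x (join y z)) (meet x y)
          = meet x (meet x (meet y (join y z))) := by ac_rfl
        _ = meet x (meet y (join y z)) := mlidem _ _
        _ = meet x y := by rw [habs2]
    have e2 : meet (meet x (join y z)) (meet x z) = meet x z := by
      calc meet (meet x (join y z)) (meet x z)
          = meet x (meet x (meet z (join z y))) := by ac_rfl
        _ = meet x (meet z (join z y)) := mlidem _ _
        _ = meet x z := by rw [habs2]
    have e1' : join (meet x (join y z)) (meet x y) = meet x (join y z) := by
      conv_lhs => rw [← e1]
      exact habs1 _ _
    have e2' : join (meet x (join y z)) (meet x z) = meet x (join y z) := by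
      conv_lhs => rw [← e2]
      exact habs1 _ _
    have jab : join (meet x (join y z)) (join (meet x y) (meet x z)) = meet x (join y z) := by
      rw [h3, e1', e2']
    have mba : meet (join (meet x y) (meet x z)) (meet x (join y z))
        = join (meet x y) (meet x z) :=
      meet_of_sup _ _ ((h2 _ _).trans jab)
    have k2 := h6 (neg y) z
    rw [h4] at k2
    have hz : meet (meet x (join y z)) (neg (join (meet x y) (meet x z))) = zero := by
      rw [nj, nm, nm]
      calc meet (meet x (join y z)) (meet (join (neg x) (neg y)) (join (neg x) (neg z)))
          = meet (meet x (join (neg x) (neg y))) (meet (join y z) (join (neg x) (neg z))) := by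
            ac_rfl
        _ = meet (meet x (neg y)) (meet (join y z) (join (neg x) (neg z))) := by rw [h6]
        _ = meet (meet x (join (neg x) (neg z))) (meet (neg y) (join y z)) := by ac_rfl
        _ = meet (meet x (neg z)) (meet (neg y) (join y z)) := by rw [h6]
        _ = meet (meet x (neg z)) (meet (neg y) z) := by rw [k2]
        _ = meet (meet x (neg y)) (meet z (neg z)) := by ac_rfl
        _ = meet (meet x (neg y)) zero := by rw [mneg]
        _ = zero := m0' _
    have main := om (join (meet x y) (meet x z)) (meet x (join y z)) mba
    rw [hz] at main
    rw [h2, h7] at main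
    exact main.symm
  -- build the structures
  letI instMax : Max B := ⟨join⟩
  letI instMin : Min B := ⟨meet⟩
  letI lat : Lattice B := Lattice.mk' h2 (fun a b c => (h3 a b c).symm) mcomm
    (fun a b c => (massoc a b c).symm) habs1 habs2
  letI dlat : DistribLattice B := DistribLattice.ofInfSupLe
    (fun a b c => le_of_eq (distrib a b c))
  letI ba : BooleanAlgebra B :=
    { dlat with
      compl := neg
      top := one
      bot := zero
      sdiff := fun a b => meet a (neg b)
      himp := fun a b => join b (neg a)
      inf_compl_le_bot := fun x => le_of_eq (mneg x)
      top_le_sup_compl := fun x => le_of_eq (jneg x).symm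
      le_top := fun a => sup_eq_right.mp ((h2 a one).trans (j1 a))
      bot_le := fun a => sup_eq_right.mp (h7 a)
      sdiff_eq := fun a b => rfl
      himp_eq := fun a b => rfl }
  exact ⟨ba, fun x y => rfl, fun x y => rfl, fun x => rfl, rfl, rfl⟩
end

section
/- Let θ be a congruence on the Płonka sum A of a semilattice direct system of groups. Then: (a) for every (i,j) ∈ S_θ and every a ∈ G i, the pair ⟨i,a⟩ and ⟨i⊔j, p_{i,i⊔j}(a)⟩ are θ-related; (b) S_θ is reflexive and symmetric; (c) S_θ is closed under componentwise joins: if (i,j) ∈ S_θ and (u,v) ∈ S_θ then (i⊔u, j⊔v) ∈ S_θ; (d) S_θ is upper transitive: if (i,j) ∈ S_θ and (j,k) ∈ S_θ then (i, i⊔k) ∈ S_θ. -/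
/-! Płonka sum of a semilattice direct system of groups.

`I` is a join-semilattice, `G i` are groups, and `p i j h : G i →* G j` (for `h : i ≤ j`)
are the transition homomorphisms. The Płonka sum is the sigma type `Σ i, G i` with
multiplication `⟨i,a⟩·⟨j,b⟩ = ⟨i⊔j, p_{i,i⊔j}(a) · p_{j,i⊔j}(b)⟩` and inversion
`⟨i,a⟩⁻¹ = ⟨i,a⁻¹⟩` (a Clifford semigroup). -/

variable {I : Type*} [SemilatticeSup I] {G : I → Type*} [∀ i, Group (G i)]

/-- Multiplication of the Płonka sum. -/
def pmul (p : ∀ i j : I, i ≤ j → (G i →* G j)) (x y : Σ i, G i) : Σ i, G i :=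
  ⟨x.1 ⊔ y.1, p x.1 (x.1 ⊔ y.1) le_sup_left x.2 * p y.1 (x.1 ⊔ y.1) le_sup_right y.2⟩

/-- Inversion of the Płonka sum. -/
def pinv (x : Σ i, G i) : Σ i, G i := ⟨x.1, x.2⁻¹⟩

/-- `θ` is a congruence on the Płonka sum: an equivalence relation compatible with
multiplication and inversion. -/
def IsCong (p : ∀ i j : I, i ≤ j → (G i →* G j))
    (θ : (Σ i, G i) → (Σ i, G i) → Prop) : Prop :=
  Equivalence θ ∧
    (∀ x x' y y', θ x x' → θ y y' → θ (pmul p x y) (pmul p x' y')) ∧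
    (∀ x x', θ x x' → θ (pinv x) (pinv x'))

/-- `S_θ`: the pairs of indices related by `θ`. -/
def Srel (θ : (Σ i, G i) → (Σ i, G i) → Prop) (i j : I) : Prop :=
  ∃ (a : G i) (b : G j), θ ⟨i, a⟩ ⟨j, b⟩

/-- `C_θ`. -/
def Crel (θ : (Σ i, G i) → (Σ i, G i) → Prop) (i j : I) : Prop :=
  Srel θ i (i ⊔ j) ∧ Srel θ j (i ⊔ j)

/-- A semilattice congruence on `I`: an equivalence relation compatible with `⊔`. -/
def IsSemilatticeCong {I : Type*} [SemilatticeSup I] (C : I → I → Prop) : Prop :=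
  Equivalence C ∧ ∀ i₁ j₁ i₂ j₂, C i₁ j₁ → C i₂ j₂ → C (i₁ ⊔ i₂) (j₁ ⊔ j₂)

/-- Basic properties of `S_θ` for a congruence `θ` on the Płonka sum of a semilattice
direct system of groups: (a) for `(i,j) ∈ S_θ` and `a ∈ G i`, `⟨i,a⟩ θ ⟨i⊔j, p_{i,i⊔j}(a)⟩`;
(b) `S_θ` is reflexive and symmetric; (c) `S_θ` is closed under componentwise joins;
(d) `S_θ` is upper transitive. -/
theorem Srel_properties
    (p : ∀ i j : I, i ≤ j → (G i →* G j))
    (hid : ∀ (i : I) (h : i ≤ i) (a : G i), p i i h a = a)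
    (hcomp : ∀ (i j k : I) (hij : i ≤ j) (hjk : j ≤ k) (a : G i),
      p j k hjk (p i j hij a) = p i k (hij.trans hjk) a)
    (θ : (Σ i, G i) → (Σ i, G i) → Prop) (hθ : IsCong p θ) :
    -- (a)
    (∀ i j : I, Srel θ i j → ∀ a : G i, θ ⟨i, a⟩ ⟨i ⊔ j, p i (i ⊔ j) le_sup_left a⟩) ∧
    -- (b)
    (∀ i : I, Srel θ i i) ∧
    (∀ i j : I, Srel θ i j → Srel θ j i) ∧
    -- (c)
    (∀ i j u v : I, Srel θ i j → Srel θ u v → Srel θ (i ⊔ u) (j ⊔ v)) ∧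
    -- (d)
    (∀ i j k : I, Srel θ i j → Srel θ j k → Srel θ i (i ⊔ k)) := by

  obtain ⟨heq, hmul, hinv⟩ := hθ
  -- key: collapsing a `Sigma.mk` whose index equals the source index
  have mkp : ∀ (α β : I) (h : α ≤ β) (e : β = α) (x : G α),
      (⟨β, p α β h x⟩ : Σ i, G i) = ⟨α, x⟩ := by
    intro α β h e x
    subst e
    simp [hid]
  have pmul_same : ∀ (α : I) (x y : G α),
      pmul p (⟨α, x⟩ : Σ i, G i) ⟨α, y⟩ = ⟨α, x * y⟩ := by
    intro α x y
    show (⟨α ⊔ α, p α (α ⊔ α) le_sup_left x * p α (α ⊔ α) le_sup_right y⟩ : Σ i, G i) = _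
    have : p α (α ⊔ α) le_sup_left x * p α (α ⊔ α) le_sup_right y
        = p α (α ⊔ α) le_sup_left (x * y) := by
      rw [map_mul]
    rw [this]
    exact mkp α (α ⊔ α) le_sup_left (sup_idem α) (x * y)
  have unit1 : ∀ (α : I) (x : G α),
      pmul p (⟨α, x⟩ : Σ i, G i) (pinv ⟨α, x⟩) = ⟨α, 1⟩ := by
    intro α x
    have := pmul_same α x x⁻¹
    simpa [pinv] using this
  have mul_one' : ∀ (α β : I) (x : G α),
      pmul p (⟨α, x⟩ : Σ i, G i) ⟨β, (1 : G β)⟩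
        = ⟨α ⊔ β, p α (α ⊔ β) le_sup_left x⟩ := by
    intro α β x
    show (⟨α ⊔ β, _⟩ : Σ i, G i) = _
    simp
  -- (a)
  have ha : ∀ i j : I, Srel θ i j → ∀ a : G i,
      θ ⟨i, a⟩ ⟨i ⊔ j, p i (i ⊔ j) le_sup_left a⟩ := by
    rintro i j ⟨a₀, b₀, hab⟩ a
    have key := hmul ⟨i, a⟩ ⟨i, a⟩ _ _ (heq.refl _)
      (hmul _ _ _ _ hab (hinv _ _ hab))
    rw [unit1, unit1, mul_one', mul_one'] at key
    have e1 : (⟨i ⊔ i, p i (i ⊔ i) le_sup_left a⟩ : Σ i, G i) = ⟨i, a⟩ :=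
      mkp i (i ⊔ i) le_sup_left (sup_idem i) a
    rw [e1] at key
    exact key
  refine ⟨ha, ?_, ?_, ?_, ?_⟩
  · intro i
    exact ⟨1, 1, heq.refl _⟩
  · rintro i j ⟨a, b, hab⟩
    exact ⟨b, a, heq.symm hab⟩
  · rintro i j u v ⟨a, b, hab⟩ ⟨c, d, hcd⟩
    exact ⟨_, _, hmul _ _ _ _ hab hcd⟩
  · rintro i j k ⟨a, b, hab⟩ ⟨c, d, hcd⟩
    -- θ ⟨i⊔k, X⟩ ⟨j, b*c⟩
    have h4 := hmul (⟨i, a⟩ : Σ i, G i) ⟨j, b⟩ ⟨k, d⟩ ⟨j, c⟩ hab (heq.symm hcd)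
    rw [pmul_same] at h4
    -- multiply by ⟨k,d⁻¹⟩ θ ⟨j,c⁻¹⟩ on the right (symm form)
    have h5 := hmul _ _ _ _ (heq.symm h4) (hinv _ _ hcd)
    rw [show pinv (⟨j, c⟩ : Σ i, G i) = ⟨j, c⁻¹⟩ from rfl, pmul_same] at h5
    -- left side is ⟨j, b⟩
    have eL : b * c * c⁻¹ = b := by group
    rw [eL] at h5
    -- right side collapses to index i ⊔ k
    set X := p i (i ⊔ k) le_sup_left a * p k (i ⊔ k) le_sup_right d
      with hX
    have eR : pmul p (⟨i ⊔ k, X⟩ : Σ i, G i) (pinv ⟨k, d⟩)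
        = ⟨i ⊔ k, X * p k (i ⊔ k) le_sup_right d⁻¹⟩ := by
      show (⟨(i ⊔ k) ⊔ k, p (i ⊔ k) ((i ⊔ k) ⊔ k) le_sup_left X
          * p k ((i ⊔ k) ⊔ k) le_sup_right d⁻¹⟩ : Σ i, G i) = _
      have hk : (k : I) ≤ i ⊔ k := le_sup_right
      have e2 : p k ((i ⊔ k) ⊔ k) le_sup_right d⁻¹
          = p (i ⊔ k) ((i ⊔ k) ⊔ k) le_sup_left (p k (i ⊔ k) le_sup_right d⁻¹) := by
        rw [hcomp]
      rw [e2, ← map_mul]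
      exact mkp (i ⊔ k) ((i ⊔ k) ⊔ k) le_sup_left (sup_right_idem i k) _
    rw [show pmul p (⟨i, a⟩ : Σ i, G i) ⟨k, d⟩ = ⟨i ⊔ k, X⟩ from rfl, eR] at h5
    exact ⟨a, _, heq.trans hab h5⟩
end

section
/- Let θ be a congruence on the Płonka sum A of a semilattice direct system of groups, and let i, j, k ∈ I with (i,j) ∈ S_θ and (j,k) ∈ S_θ. Then (i,k) ∈ S_θ if and only if there exist a ∈ G i and c ∈ G k such that ⟨i⊔k, p_{i,i⊔k}(a)⟩ and ⟨i⊔k, p_{k,i⊔k}(c)⟩ are θ-related. -/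
/-! Płonka sum of a semilattice direct system of groups.

`I` is a join-semilattice, `G i` are groups, and `p i j h : G i →* G j` (for `h : i ≤ j`)
are the transition homomorphisms. The Płonka sum is the sigma type `Σ i, G i` with
multiplication `⟨i,a⟩·⟨j,b⟩ = ⟨i⊔j, p_{i,i⊔j}(a) · p_{j,i⊔j}(b)⟩` and inversion
`⟨i,a⟩⁻¹ = ⟨i,a⁻¹⟩` (a Clifford semigroup). -/

variable {I : Type*} [SemilatticeSup I] {G : I → Type*} [∀ i, Group (G i)]

private lemma mk_p_congr (p : ∀ i j : I, i ≤ j → (G i →* G j)) (i n m : I) (e : n = m)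
    (hin : i ≤ n) (him : i ≤ m) (a : G i) :
    (⟨n, p i n hin a⟩ : Σ i, G i) = ⟨m, p i m him a⟩ := by subst e; rfl

private lemma mk_one_congr (n m : I) (e : n = m) :
    (⟨n, (1 : G n)⟩ : Σ i, G i) = ⟨m, (1 : G m)⟩ := by subst e; rfl

private lemma pmul_mk_one (p : ∀ i j : I, i ≤ j → (G i →* G j)) (i m : I) (him : i ≤ m)
    (a : G i) : pmul p ⟨i, a⟩ ⟨m, (1 : G m)⟩ = ⟨m, p i m him a⟩ := by
  unfold pmul
  simp only [map_one, mul_one]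
  exact mk_p_congr p i (i ⊔ m) m (sup_eq_right.mpr him) le_sup_left him a

private lemma pmul_inv_self (p : ∀ i j : I, i ≤ j → (G i →* G j)) (i : I) (a : G i) :
    pmul p ⟨i, a⟩ (pinv ⟨i, a⟩) = ⟨i, (1 : G i)⟩ := by
  unfold pmul pinv
  have h1 : p i (i ⊔ i) le_sup_right (a⁻¹) = p i (i ⊔ i) le_sup_left (a⁻¹) := rfl
  simp only [h1, ← map_mul, mul_inv_cancel, map_one]
  exact mk_one_congr _ _ (sup_idem i)

private lemma lift_rel (p : ∀ i j : I, i ≤ j → (G i →* G j))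
    (θ : (Σ i, G i) → (Σ i, G i) → Prop) (hθ : IsCong p θ)
    {i j : I} {a : G i} {b : G j} (h : θ ⟨i, a⟩ ⟨j, b⟩) (m : I) (him : i ≤ m) (hjm : j ≤ m) :
    θ ⟨m, p i m him a⟩ ⟨m, p j m hjm b⟩ := by
  have h1 := hθ.2.1 _ _ _ _ h (hθ.1.refl ⟨m, (1 : G m)⟩)
  rwa [pmul_mk_one p i m him a, pmul_mk_one p j m hjm b] at h1

private lemma one_rel (p : ∀ i j : I, i ≤ j → (G i →* G j))
    (θ : (Σ i, G i) → (Σ i, G i) → Prop) (hθ : IsCong p θ)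
    {i j : I} {a : G i} {b : G j} (h : θ ⟨i, a⟩ ⟨j, b⟩) :
    θ ⟨i, (1 : G i)⟩ ⟨j, (1 : G j)⟩ := by
  have h1 := hθ.2.1 _ _ _ _ h (hθ.2.2 _ _ h)
  rwa [pmul_inv_self, pmul_inv_self] at h1

/-- Characterization of transitivity of `S_θ`: if `(i,j) ∈ S_θ` and `(j,k) ∈ S_θ`, then
`(i,k) ∈ S_θ` iff some `a ∈ G i`, `c ∈ G k` have θ-related images in the fiber over `i⊔k`. -/
theorem Srel_trans_iff
    (p : ∀ i j : I, i ≤ j → (G i →* G j))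
    (hid : ∀ (i : I) (h : i ≤ i) (a : G i), p i i h a = a)
    (hcomp : ∀ (i j k : I) (hij : i ≤ j) (hjk : j ≤ k) (a : G i),
      p j k hjk (p i j hij a) = p i k (hij.trans hjk) a)
    (θ : (Σ i, G i) → (Σ i, G i) → Prop) (hθ : IsCong p θ)
    (i j k : I) (hij : Srel θ i j) (hjk : Srel θ j k) :
    Srel θ i k ↔
      ∃ (a : G i) (c : G k),
        θ ⟨i ⊔ k, p i (i ⊔ k) le_sup_left a⟩ ⟨i ⊔ k, p k (i ⊔ k) le_sup_right c⟩ := by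
  constructor
  · rintro ⟨a, c, hac⟩
    exact ⟨a, c, lift_rel p θ hθ hac (i ⊔ k) le_sup_left le_sup_right⟩
  · rintro -
    obtain ⟨a₁, b₁, h1⟩ := hij
    obtain ⟨b₂, c₂, h2⟩ := hjk
    exact ⟨1, 1, hθ.1.trans (one_rel p θ hθ h1) (one_rel p θ hθ h2)⟩
end

section
/- Let θ be a congruence on the Płonka sum A of a semilattice direct system of groups. Then: (i) C_θ is a semilattice congruence on I; (ii) for every (i,j) ∈ I × I, (i,j) ∈ S_θ if and only if (i,j) ∈ C_θ and there exist a ∈ G i and b ∈ G j with ⟨i⊔j, p_{i,i⊔j}(a)⟩ θ-related to ⟨i⊔j, p_{j,i⊔j}(b)⟩; (iii) C_θ is the smallest semilattice congruence on I containing S_θ, i.e. S_θ ⊆ C_θ and every semilattice congruence on I containing S_θ contains C_θ. -/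
/-! Płonka sum of a semilattice direct system of groups.

`I` is a join-semilattice, `G i` are groups, and `p i j h : G i →* G j` (for `h : i ≤ j`)
are the transition homomorphisms. The Płonka sum is the sigma type `Σ i, G i` with
multiplication `⟨i,a⟩·⟨j,b⟩ = ⟨i⊔j, p_{i,i⊔j}(a) · p_{j,i⊔j}(b)⟩` and inversion
`⟨i,a⟩⁻¹ = ⟨i,a⁻¹⟩` (a Clifford semigroup). -/

variable {I : Type*} [SemilatticeSup I] {G : I → Type*} [∀ i, Group (G i)]

section PlonkaAux

variable (p : ∀ i j : I, i ≤ j → (G i →* G j)) (θ : (Σ i, G i) → (Σ i, G i) → Prop)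

lemma sig_one {k j : I} (e : k = j) : (⟨k, (1 : G k)⟩ : Σ i, G i) = ⟨j, 1⟩ := by
  subst e; rfl

lemma pmul_one (i j : I) :
    pmul p ⟨i, (1 : G i)⟩ ⟨j, (1 : G j)⟩ = ⟨i ⊔ j, 1⟩ := by
  simp [pmul]

lemma pmul_self_inv (i : I) (a : G i) :
    pmul p ⟨i, a⟩ (pinv ⟨i, a⟩) = ⟨i, (1 : G i)⟩ := by
  simp only [pmul, pinv, ← map_mul, mul_inv_cancel, map_one]
  show (⟨i ⊔ i, p i (i ⊔ i) le_sup_left a * p i (i ⊔ i) le_sup_right a⁻¹⟩ : Σ i, G i) = ⟨i, 1⟩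
  rw [← map_mul, mul_inv_cancel, map_one]; exact sig_one (G := G) (sup_idem i)

variable (hθ : IsCong p θ)
include hθ

/-- Normalization: any `θ`-relation yields the relation on the identity elements. -/
lemma theta_norm {i j : I} {a : G i} {b : G j} (h : θ ⟨i, a⟩ ⟨j, b⟩) :
    θ ⟨i, (1 : G i)⟩ ⟨j, (1 : G j)⟩ := by
  have hm := hθ.2.1 _ _ _ _ h (hθ.2.2 _ _ h)
  rwa [pmul_self_inv, pmul_self_inv] at hm

lemma srel_iff_one (i j : I) :
    Srel θ i j ↔ θ ⟨i, (1 : G i)⟩ ⟨j, (1 : G j)⟩ := by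
  constructor
  · rintro ⟨a, b, h⟩; exact theta_norm p θ hθ h
  · exact fun h => ⟨1, 1, h⟩

lemma theta_sup {i₁ j₁ i₂ j₂ : I}
    (h₁ : θ ⟨i₁, (1 : G i₁)⟩ ⟨j₁, (1 : G j₁)⟩)
    (h₂ : θ ⟨i₂, (1 : G i₂)⟩ ⟨j₂, (1 : G j₂)⟩) :
    θ ⟨i₁ ⊔ i₂, (1 : G (i₁ ⊔ i₂))⟩ ⟨j₁ ⊔ j₂, (1 : G (j₁ ⊔ j₂))⟩ := by
  have hm := hθ.2.1 _ _ _ _ h₁ h₂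
  rwa [pmul_one, pmul_one] at hm

lemma theta_left_sup {i j : I} (h : θ ⟨i, (1 : G i)⟩ ⟨j, (1 : G j)⟩) :
    θ ⟨i, (1 : G i)⟩ ⟨i ⊔ j, (1 : G (i ⊔ j))⟩ := by
  have hm := theta_sup p θ hθ (hθ.1.refl (⟨i, (1 : G i)⟩ : Σ i, G i)) h
  rwa [sig_one (sup_idem i)] at hm

lemma crel_iff_one (i j : I) :
    Crel θ i j ↔ θ ⟨i, (1 : G i)⟩ ⟨j, (1 : G j)⟩ := by
  constructor
  · rintro ⟨h₁, h₂⟩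
    rw [srel_iff_one p θ hθ] at h₁ h₂
    exact hθ.1.trans h₁ (hθ.1.symm h₂)
  · intro h
    constructor
    · exact ⟨1, 1, theta_left_sup p θ hθ h⟩
    · rw [sup_comm i j]
      exact ⟨1, 1, theta_left_sup p θ hθ (hθ.1.symm h)⟩

end PlonkaAux

/-- For a congruence `θ` on the Płonka sum: (i) `C_θ` is a semilattice congruence on `I`;
(ii) `(i,j) ∈ S_θ` iff `(i,j) ∈ C_θ` and some `a ∈ G i`, `b ∈ G j` have θ-related images
in the fiber over `i⊔j`; (iii) `C_θ` is the smallest semilattice congruence containing `S_θ`. -/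
theorem Crel_properties
    (p : ∀ i j : I, i ≤ j → (G i →* G j))
    (hid : ∀ (i : I) (h : i ≤ i) (a : G i), p i i h a = a)
    (hcomp : ∀ (i j k : I) (hij : i ≤ j) (hjk : j ≤ k) (a : G i),
      p j k hjk (p i j hij a) = p i k (hij.trans hjk) a)
    (θ : (Σ i, G i) → (Σ i, G i) → Prop) (hθ : IsCong p θ) :
    -- (i)
    IsSemilatticeCong (Crel θ) ∧
    -- (ii)
    (∀ i j : I, Srel θ i j ↔
      Crel θ i j ∧ ∃ (a : G i) (b : G j),
        θ ⟨i ⊔ j, p i (i ⊔ j) le_sup_left a⟩ ⟨i ⊔ j, p j (i ⊔ j) le_sup_right b⟩) ∧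
    -- (iii)
    (∀ i j : I, Srel θ i j → Crel θ i j) ∧
    (∀ C : I → I → Prop, IsSemilatticeCong C → (∀ i j : I, Srel θ i j → C i j) →
      ∀ i j : I, Crel θ i j → C i j) := by
  have Sone := srel_iff_one p θ hθ
  have Cone := crel_iff_one p θ hθ
  refine ⟨⟨⟨?_, ?_, ?_⟩, ?_⟩, ?_, ?_, ?_⟩
  · intro i; rw [Cone]; exact hθ.1.refl _
  · intro i j h; rw [Cone] at h ⊢; exact hθ.1.symm h
  · intro i j k h₁ h₂; rw [Cone] at h₁ h₂ ⊢; exact hθ.1.trans h₁ h₂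
  · intro i₁ j₁ i₂ j₂ h₁ h₂
    rw [Cone] at h₁ h₂ ⊢
    exact theta_sup p θ hθ h₁ h₂
  · intro i j
    constructor
    · intro h
      refine ⟨(Cone i j).2 ((Sone i j).1 h), 1, 1, ?_⟩
      simp only [map_one]
      exact hθ.1.refl _
    · rintro ⟨hc, -⟩
      rw [Sone]; rw [Cone] at hc; exact hc
  · intro i j h
    rw [Sone] at h
    exact (Cone i j).2 h
  · intro C hC hSC i j h
    rcases h with ⟨h₁, h₂⟩
    exact hC.1.trans (hSC _ _ h₁) (hC.1.symm (hSC _ _ h₂))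
end

section
/- Let θ be a congruence on the Płonka sum A of a semilattice direct system of groups. Then: (i) for all i, j ∈ I and all a, b ∈ G i, if (a,b) ∈ θ_{ii} then (p_{i,i⊔j}(a), p_{i,i⊔j}(b)) ∈ θ_{i⊔j, i⊔j}; (ii) if moreover (i,j) ∈ S_θ, then conversely (p_{i,i⊔j}(a), p_{i,i⊔j}(b)) ∈ θ_{i⊔j, i⊔j} implies (a,b) ∈ θ_{ii}; (iii) if (i,j) ∈ S_θ, then for all a ∈ G i and b ∈ G j, (a,b) ∈ θ_{ij} if and only if (p_{i,i⊔j}(a), p_{j,i⊔j}(b)) ∈ θ_{i⊔j, i⊔j}. -/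
/-! Płonka sum of a semilattice direct system of groups.

`I` is a join-semilattice, `G i` are groups, and `p i j h : G i →* G j` (for `h : i ≤ j`)
are the transition homomorphisms. The Płonka sum is the sigma type `Σ i, G i` with
multiplication `⟨i,a⟩·⟨j,b⟩ = ⟨i⊔j, p_{i,i⊔j}(a) · p_{j,i⊔j}(b)⟩` and inversion
`⟨i,a⟩⁻¹ = ⟨i,a⁻¹⟩` (a Clifford semigroup). -/

variable {I : Type*} [SemilatticeSup I] {G : I → Type*} [∀ i, Group (G i)]

/-- Structure of the fibers `θ_{ij} := {(a,b) : θ ⟨i,a⟩ ⟨j,b⟩}` of a congruence `θ`: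
(i) pure fibers are pushed forward by the transition maps; (ii) if `(i,j) ∈ S_θ` the
converse holds; (iii) for `(i,j) ∈ S_θ` the mixed fiber `θ_{ij}` is the preimage of the
pure fiber `θ_{i⊔j,i⊔j}` under `p_{i,i⊔j} × p_{j,i⊔j}`. -/
theorem fiber_properties
    (p : ∀ i j : I, i ≤ j → (G i →* G j))
    (hid : ∀ (i : I) (h : i ≤ i) (a : G i), p i i h a = a)
    (hcomp : ∀ (i j k : I) (hij : i ≤ j) (hjk : j ≤ k) (a : G i),
      p j k hjk (p i j hij a) = p i k (hij.trans hjk) a)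
    (θ : (Σ i, G i) → (Σ i, G i) → Prop) (hθ : IsCong p θ) :
    -- (i)
    (∀ (i j : I) (a b : G i), θ ⟨i, a⟩ ⟨i, b⟩ →
      θ ⟨i ⊔ j, p i (i ⊔ j) le_sup_left a⟩ ⟨i ⊔ j, p i (i ⊔ j) le_sup_left b⟩) ∧
    -- (ii)
    (∀ i j : I, Srel θ i j → ∀ a b : G i,
      θ ⟨i ⊔ j, p i (i ⊔ j) le_sup_left a⟩ ⟨i ⊔ j, p i (i ⊔ j) le_sup_left b⟩ →
      θ ⟨i, a⟩ ⟨i, b⟩) ∧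
    -- (iii)
    (∀ i j : I, Srel θ i j → ∀ (a : G i) (b : G j),
      θ ⟨i, a⟩ ⟨j, b⟩ ↔
        θ ⟨i ⊔ j, p i (i ⊔ j) le_sup_left a⟩ ⟨i ⊔ j, p j (i ⊔ j) le_sup_right b⟩) := by
  obtain ⟨heqv, hmul, hinv⟩ := hθ
  have cast_eq : ∀ (k k' : I) (e : k = k') (x : G k),
      (⟨k, x⟩ : Σ i, G i) = ⟨k', p k k' e.le x⟩ := by
    intro k k' e x; subst e; rw [hid]
  -- key: from Srel get the identities related
  have key : ∀ i j : I, Srel θ i j → θ ⟨i, 1⟩ ⟨j, 1⟩ := by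
    intro i j hS
    obtain ⟨c, d, h0⟩ := hS
    have h1 := hmul _ _ _ _ (hinv _ _ h0) h0
    have e1 : pmul p (pinv ⟨i, c⟩) ⟨i, c⟩ = ⟨i, 1⟩ := by
      show (⟨i ⊔ i, p i (i ⊔ i) le_sup_left c⁻¹ * p i (i ⊔ i) le_sup_right c⟩ :
        Σ i, G i) = _
      rw [cast_eq (i ⊔ i) i (sup_idem _)]
      simp [hcomp, hid]
    have e2 : pmul p (pinv ⟨j, d⟩) ⟨j, d⟩ = ⟨j, 1⟩ := by
      show (⟨j ⊔ j, p j (j ⊔ j) le_sup_left d⁻¹ * p j (j ⊔ j) le_sup_right d⟩ :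
        Σ i, G i) = _
      rw [cast_eq (j ⊔ j) j (sup_idem _)]
      simp [hcomp, hid]
    rwa [e1, e2] at h1
  -- F : push an element of G i up to i ⊔ j along θ
  have F : ∀ (i j : I), θ ⟨i, 1⟩ ⟨j, 1⟩ → ∀ a : G i,
      θ ⟨i, a⟩ ⟨i ⊔ j, p i (i ⊔ j) le_sup_left a⟩ := by
    intro i j E a
    have h1 := hmul ⟨i, a⟩ ⟨i, a⟩ _ _ (heqv.refl _) E
    have e1 : pmul p ⟨i, a⟩ ⟨i, (1 : G i)⟩ = ⟨i, a⟩ := by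
      show (⟨i ⊔ i, p i (i ⊔ i) le_sup_left a * p i (i ⊔ i) le_sup_right 1⟩ :
        Σ i, G i) = _
      rw [cast_eq (i ⊔ i) i (sup_idem _)]
      simp [hcomp, hid]
    have e2 : pmul p ⟨i, a⟩ ⟨j, (1 : G j)⟩ = ⟨i ⊔ j, p i (i ⊔ j) le_sup_left a⟩ := by
      show (⟨i ⊔ j, p i (i ⊔ j) le_sup_left a * p j (i ⊔ j) le_sup_right 1⟩ :
        Σ i, G i) = _
      simp
    rwa [e1, e2] at h1
  -- F' : push an element of G j up to i ⊔ j along θ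
  have F' : ∀ (i j : I), θ ⟨i, 1⟩ ⟨j, 1⟩ → ∀ b : G j,
      θ ⟨i ⊔ j, p j (i ⊔ j) le_sup_right b⟩ ⟨j, b⟩ := by
    intro i j E b
    have h1 := hmul _ _ ⟨j, b⟩ ⟨j, b⟩ E (heqv.refl _)
    have e1 : pmul p ⟨i, (1 : G i)⟩ ⟨j, b⟩ = ⟨i ⊔ j, p j (i ⊔ j) le_sup_right b⟩ := by
      show (⟨i ⊔ j, p i (i ⊔ j) le_sup_left 1 * p j (i ⊔ j) le_sup_right b⟩ :
        Σ i, G i) = _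
      simp
    have e2 : pmul p ⟨j, (1 : G j)⟩ ⟨j, b⟩ = ⟨j, b⟩ := by
      show (⟨j ⊔ j, p j (j ⊔ j) le_sup_left 1 * p j (j ⊔ j) le_sup_right b⟩ :
        Σ i, G i) = _
      rw [cast_eq (j ⊔ j) j (sup_idem _)]
      simp [hcomp, hid]
    rwa [e1, e2] at h1
  refine ⟨?_, ?_, ?_⟩
  · -- (i)
    intro i j a b h
    have h1 := hmul ⟨i, a⟩ ⟨i, b⟩ ⟨j, (1 : G j)⟩ ⟨j, (1 : G j)⟩ h (heqv.refl _)
    have e : ∀ x : G i, pmul p ⟨i, x⟩ ⟨j, (1 : G j)⟩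
        = ⟨i ⊔ j, p i (i ⊔ j) le_sup_left x⟩ := by
      intro x
      show (⟨i ⊔ j, p i (i ⊔ j) le_sup_left x * p j (i ⊔ j) le_sup_right 1⟩ :
        Σ i, G i) = _
      simp
    rwa [e a, e b] at h1
  · -- (ii)
    intro i j hS a b H
    have E := key i j hS
    exact heqv.trans (F i j E a) (heqv.trans H (heqv.symm (F i j E b)))
  · -- (iii)
    intro i j hS a b
    have E := key i j hS
    constructor
    · intro h
      exact heqv.trans (heqv.symm (F i j E a)) (heqv.trans h (heqv.symm (F' i j E b)))
    · intro h
      exact heqv.trans (F i j E a) (heqv.trans h (F' i j E b))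
end

section
/- Let θ be a congruence on the Płonka sum A of a semilattice direct system of groups. Then S_θ is transitive, and hence S_θ is a semilattice congruence on I. (This is the instance, for Clifford semigroups, of the general fact that S_θ is transitive whenever the images of the transition homomorphisms into a common fiber always intersect; here every image contains the identity element of the target group.) -/
/-! Płonka sum of a semilattice direct system of groups.

`I` is a join-semilattice, `G i` are groups, and `p i j h : G i →* G j` (for `h : i ≤ j`)
are the transition homomorphisms. The Płonka sum is the sigma type `Σ i, G i` with
multiplication `⟨i,a⟩·⟨j,b⟩ = ⟨i⊔j, p_{i,i⊔j}(a) · p_{j,i⊔j}(b)⟩` and inversion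
`⟨i,a⟩⁻¹ = ⟨i,a⁻¹⟩` (a Clifford semigroup). -/

variable {I : Type*} [SemilatticeSup I] {G : I → Type*} [∀ i, Group (G i)]

/-- For a congruence `θ` on the Płonka sum of a semilattice direct system of groups,
`S_θ` is transitive, and hence `S_θ` is a semilattice congruence on `I`. -/
theorem Srel_is_semilattice_congruence
    (p : ∀ i j : I, i ≤ j → (G i →* G j))
    (hid : ∀ (i : I) (h : i ≤ i) (a : G i), p i i h a = a)
    (hcomp : ∀ (i j k : I) (hij : i ≤ j) (hjk : j ≤ k) (a : G i),
      p j k hjk (p i j hij a) = p i k (hij.trans hjk) a)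
    (θ : (Σ i, G i) → (Σ i, G i) → Prop) (hθ : IsCong p θ) :
    (∀ i j k : I, Srel θ i j → Srel θ j k → Srel θ i k) ∧
    IsSemilatticeCong (Srel θ) := by
  obtain ⟨heq, hmul, hinv⟩ := hθ
  have cast1 : ∀ i j : I, i = j → (⟨i, (1 : G i)⟩ : Σ i, G i) = ⟨j, 1⟩ := by
    rintro i j rfl; rfl
  -- key lemma: Srel θ i j implies θ ⟨i,1⟩ ⟨j,1⟩
  have key : ∀ i j : I, Srel θ i j → θ ⟨i, (1 : G i)⟩ ⟨j, 1⟩ := by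
    rintro i j ⟨a, b, hab⟩
    have h2 := hmul _ _ _ _ hab (hinv _ _ hab)
    have e1 : pmul p ⟨i, a⟩ (pinv ⟨i, a⟩) = ⟨i, (1 : G i)⟩ := by
      show (⟨i ⊔ i, _⟩ : Σ i, G i) = _
      show (⟨i ⊔ i, p i (i ⊔ i) le_sup_left a * p i (i ⊔ i) le_sup_right a⁻¹⟩ : Σ i, G i) = _
      rw [show p i (i ⊔ i) le_sup_left a * p i (i ⊔ i) le_sup_right a⁻¹
            = (1 : G (i ⊔ i)) by rw [map_inv]; group]
      exact cast1 _ _ (sup_idem _)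
    have e2 : pmul p ⟨j, b⟩ (pinv ⟨j, b⟩) = ⟨j, (1 : G j)⟩ := by
      show (⟨j ⊔ j, _⟩ : Σ i, G i) = _
      show (⟨j ⊔ j, p j (j ⊔ j) le_sup_left b * p j (j ⊔ j) le_sup_right b⁻¹⟩ : Σ i, G i) = _
      rw [show p j (j ⊔ j) le_sup_left b * p j (j ⊔ j) le_sup_right b⁻¹
            = (1 : G (j ⊔ j)) by rw [map_inv]; group]
      exact cast1 _ _ (sup_idem _)
    rwa [e1, e2] at h2
  have htrans : ∀ i j k : I, Srel θ i j → Srel θ j k → Srel θ i k := by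
    intro i j k h1 h2
    exact ⟨1, 1, heq.trans (key _ _ h1) (key _ _ h2)⟩
  refine ⟨htrans, ⟨⟨fun i => ⟨1, 1, heq.refl _⟩,
    fun ⟨a, b, hab⟩ => ⟨b, a, heq.symm hab⟩,
    fun h1 h2 => htrans _ _ _ h1 h2⟩, ?_⟩⟩
  intro i₁ j₁ i₂ j₂ h1 h2
  have := hmul _ _ _ _ (key _ _ h1) (key _ _ h2)
  exact ⟨_, _, this⟩
end

section
/- Let A be the Płonka sum of a semilattice direct system of groups. Let S be a semilattice congruence on I and, for each i ∈ I, let N i be a normal subgroup of G i, such that: (a) for all i, j ∈ I, a ∈ N i implies p_{i,i⊔j}(a) ∈ N (i⊔j); and (b) for all (i,j) ∈ S and a ∈ G i, p_{i,i⊔j}(a) ∈ N (i⊔j) implies a ∈ N i. Define the relation θ on A by: θ ⟨i,a⟩ ⟨j,b⟩ if and only if (i,j) ∈ S and p_{i,i⊔j}(a) · (p_{j,i⊔j}(b))⁻¹ ∈ N (i⊔j). Then θ is a congruence on A, i.e. an equivalence relation compatible with the multiplication and inversion of A. -/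
/-! Płonka sum of a semilattice direct system of groups.

`I` is a join-semilattice, `G i` are groups, and `p i j h : G i →* G j` (for `h : i ≤ j`)
are the transition homomorphisms. The Płonka sum is the sigma type `Σ i, G i` with
multiplication `⟨i,a⟩·⟨j,b⟩ = ⟨i⊔j, p_{i,i⊔j}(a) · p_{j,i⊔j}(b)⟩` and inversion
`⟨i,a⟩⁻¹ = ⟨i,a⁻¹⟩` (a Clifford semigroup). -/

variable {I : Type*} [SemilatticeSup I] {G : I → Type*} [∀ i, Group (G i)]

theorem pcomp' (p : ∀ i j : I, i ≤ j → (G i →* G j))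
    (hcomp : ∀ (i j k : I) (hij : i ≤ j) (hjk : j ≤ k) (a : G i),
      p j k hjk (p i j hij a) = p i k (hij.trans hjk) a)
    {i j k : I} (hij : i ≤ j) (hjk : j ≤ k) (hik : i ≤ k) (a : G i) :
    p j k hjk (p i j hij a) = p i k hik a := hcomp i j k hij hjk a

theorem pushN (p : ∀ i j : I, i ≤ j → (G i →* G j)) (N : ∀ i : I, Subgroup (G i))
    (ha : ∀ (i j : I) (a : G i), a ∈ N i → p i (i ⊔ j) le_sup_left a ∈ N (i ⊔ j))
    {i j : I} (h : i ≤ j) {a : G i} (ma : a ∈ N i) : p i j h a ∈ N j := by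
  have key : ∀ (k : I) (hk : i ≤ k), i ⊔ j = k → p i k hk a ∈ N k := by
    rintro k hk rfl
    exact ha i j a ma
  exact key j h (sup_eq_right.2 h)

theorem pullN (p : ∀ i j : I, i ≤ j → (G i →* G j)) (S : I → I → Prop)
    (N : ∀ i : I, Subgroup (G i))
    (hb : ∀ i j : I, S i j → ∀ a : G i,
      p i (i ⊔ j) le_sup_left a ∈ N (i ⊔ j) → a ∈ N i)
    {i j : I} (hs : S i j) (h : i ≤ j) {a : G i}
    (ma : p i j h a ∈ N j) : a ∈ N i := by
  refine hb i j hs a ?_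
  have key : ∀ (k : I) (hk : i ≤ k), i ⊔ j = k → p i k hk a ∈ N k →
      p i (i ⊔ j) le_sup_left a ∈ N (i ⊔ j) := by
    rintro k hk rfl h'
    exact h'
  exact key j h (sup_eq_right.2 h) ma

theorem mem2 (p : ∀ i j : I, i ≤ j → (G i →* G j)) (N : ∀ i : I, Subgroup (G i))
    {i j : I} (a : G i) (b : G j) {k k' : I} (e : k = k')
    (hik : i ≤ k) (hjk : j ≤ k) (hik' : i ≤ k') (hjk' : j ≤ k')
    (h : p i k hik a * (p j k hjk b)⁻¹ ∈ N k) :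
    p i k' hik' a * (p j k' hjk' b)⁻¹ ∈ N k' := by subst e; exact h

/-- Construction of congruences on the Płonka sum of a semilattice direct system of
groups: given a semilattice congruence `S` on `I` and normal subgroups `N i ⊴ G i`
compatible with the transition maps as in (a), (b), the relation
`θ ⟨i,a⟩ ⟨j,b⟩ ↔ (i,j) ∈ S ∧ p_{i,i⊔j}(a)·(p_{j,i⊔j}(b))⁻¹ ∈ N (i⊔j)` is a congruence. -/
theorem congruence_from_normal_subgroups
    (p : ∀ i j : I, i ≤ j → (G i →* G j))
    (hid : ∀ (i : I) (h : i ≤ i) (a : G i), p i i h a = a)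
    (hcomp : ∀ (i j k : I) (hij : i ≤ j) (hjk : j ≤ k) (a : G i),
      p j k hjk (p i j hij a) = p i k (hij.trans hjk) a)
    (S : I → I → Prop) (hS : IsSemilatticeCong S)
    (N : ∀ i : I, Subgroup (G i)) (hN : ∀ i : I, (N i).Normal)
    (ha : ∀ (i j : I) (a : G i), a ∈ N i → p i (i ⊔ j) le_sup_left a ∈ N (i ⊔ j))
    (hb : ∀ i j : I, S i j → ∀ a : G i,
      p i (i ⊔ j) le_sup_left a ∈ N (i ⊔ j) → a ∈ N i) :
    IsCong p (fun x y => S x.1 y.1 ∧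
      p x.1 (x.1 ⊔ y.1) le_sup_left x.2 * (p y.1 (x.1 ⊔ y.1) le_sup_right y.2)⁻¹
        ∈ N (x.1 ⊔ y.1)) := by
  obtain ⟨⟨Srefl, Ssymm, Strans⟩, Ssup⟩ := hS
  refine ⟨⟨?_, ?_, ?_⟩, ?_, ?_⟩
  · rintro ⟨i, a⟩
    refine ⟨Srefl i, ?_⟩
    have hpr : (le_sup_right : i ≤ i ⊔ i) = le_sup_left := rfl
    rw [hpr, mul_inv_cancel]
    exact (N _).one_mem
  · rintro ⟨i, a⟩ ⟨j, b⟩ ⟨hs, hm⟩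
    refine ⟨Ssymm hs, ?_⟩
    have h2 : p j (i ⊔ j) le_sup_right b * (p i (i ⊔ j) le_sup_left a)⁻¹ ∈ N (i ⊔ j) := by
      have := (N (i ⊔ j)).inv_mem hm
      rwa [mul_inv_rev, inv_inv] at this
    exact mem2 p N b a (sup_comm i j) le_sup_right le_sup_left le_sup_left le_sup_right h2
  · rintro ⟨i, a⟩ ⟨j, b⟩ ⟨k, c⟩ ⟨hs1, hm1⟩ ⟨hs2, hm2⟩
    refine ⟨Strans hs1 hs2, ?_⟩
    set w := i ⊔ j ⊔ k with hw
    have hiw : i ≤ w := le_sup_left.trans le_sup_left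
    have hjw : j ≤ w := le_sup_right.trans le_sup_left
    have hkw : k ≤ w := le_sup_right
    have hikw : i ⊔ k ≤ w := sup_le hiw hkw
    have m1 : p i w hiw a * (p j w hjw b)⁻¹ ∈ N w := by
      have := pushN p N ha (le_sup_left : i ⊔ j ≤ w) hm1
      rwa [map_mul, map_inv, pcomp' p hcomp _ _ hiw, pcomp' p hcomp _ _ hjw] at this
    have m2 : p j w hjw b * (p k w hkw c)⁻¹ ∈ N w := by
      have := pushN p N ha (sup_le hjw hkw : j ⊔ k ≤ w) hm2
      rwa [map_mul, map_inv, pcomp' p hcomp _ _ hjw, pcomp' p hcomp _ _ hkw] at this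
    have m12 : p i w hiw a * (p k w hkw c)⁻¹ ∈ N w := by
      have := (N w).mul_mem m1 m2
      rwa [show (p i w hiw a * (p j w hjw b)⁻¹) * (p j w hjw b * (p k w hkw c)⁻¹)
          = p i w hiw a * (p k w hkw c)⁻¹ by group] at this
    have hSsup : S (i ⊔ k) w := by
      have h1 : S ((i ⊔ k) ⊔ k) ((i ⊔ k) ⊔ j) := Ssup _ _ _ _ (Srefl (i ⊔ k)) (Ssymm hs2)
      have e1 : (i ⊔ k) ⊔ k = i ⊔ k := by rw [sup_assoc, sup_idem]
      have e2 : (i ⊔ k) ⊔ j = w := by rw [hw, sup_assoc, sup_assoc, sup_comm k j]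
      rwa [e1, e2] at h1
    refine pullN p S N hb hSsup hikw ?_
    rw [map_mul, map_inv, pcomp' p hcomp _ _ hiw, pcomp' p hcomp _ _ hkw]
    exact m12
  · rintro ⟨i, a⟩ ⟨i', a'⟩ ⟨j, b⟩ ⟨j', b'⟩ ⟨hs1, hm1⟩ ⟨hs2, hm2⟩
    refine ⟨Ssup _ _ _ _ hs1 hs2, ?_⟩
    dsimp only [pmul]
    set w := (i ⊔ j) ⊔ (i' ⊔ j') with hw
    have hiw : i ≤ w := le_sup_left.trans le_sup_left
    have hjw : j ≤ w := le_sup_right.trans le_sup_left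
    have hi'w : i' ≤ w := le_sup_left.trans le_sup_right
    have hj'w : j' ≤ w := le_sup_right.trans le_sup_right
    have m1 : p i w hiw a * (p i' w hi'w a')⁻¹ ∈ N w := by
      have := pushN p N ha (sup_le hiw hi'w : i ⊔ i' ≤ w) hm1
      rwa [map_mul, map_inv, pcomp' p hcomp _ _ hiw, pcomp' p hcomp _ _ hi'w] at this
    have m2 : p j w hjw b * (p j' w hj'w b')⁻¹ ∈ N w := by
      have := pushN p N ha (sup_le hjw hj'w : j ⊔ j' ≤ w) hm2
      rwa [map_mul, map_inv, pcomp' p hcomp _ _ hjw, pcomp' p hcomp _ _ hj'w] at this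
    have key : (p i w hiw a * p j w hjw b) * (p i' w hi'w a' * p j' w hj'w b')⁻¹ ∈ N w := by
      have c := (hN w).conj_mem _ m2 (p i w hiw a)
      have := (N w).mul_mem c m1
      rwa [show (p i w hiw a * (p j w hjw b * (p j' w hj'w b')⁻¹) * (p i w hiw a)⁻¹)
            * (p i w hiw a * (p i' w hi'w a')⁻¹)
          = (p i w hiw a * p j w hjw b) * (p i' w hi'w a' * p j' w hj'w b')⁻¹ by group] at this
    show p (i ⊔ j) w (le_sup_left : i ⊔ j ≤ w) (p i (i ⊔ j) le_sup_left a * p j (i ⊔ j) le_sup_right b) *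
      (p (i' ⊔ j') w (le_sup_right : i' ⊔ j' ≤ w) (p i' (i' ⊔ j') le_sup_left a' * p j' (i' ⊔ j') le_sup_right b'))⁻¹ ∈ N w
    rw [map_mul, map_mul, pcomp' p hcomp _ _ hiw, pcomp' p hcomp _ _ hjw,
      pcomp' p hcomp _ _ hi'w, pcomp' p hcomp _ _ hj'w]
    exact key
  · rintro ⟨i, a⟩ ⟨j, b⟩ ⟨hs, hm⟩
    refine ⟨hs, ?_⟩
    dsimp only [pinv]
    show p i (i ⊔ j) le_sup_left a⁻¹ * (p j (i ⊔ j) le_sup_right b⁻¹)⁻¹ ∈ N (i ⊔ j)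
    rw [map_inv, map_inv, inv_inv]
    have c := (hN (i ⊔ j)).conj_mem _ ((N (i ⊔ j)).inv_mem hm) (p i (i ⊔ j) le_sup_left a)⁻¹
    rwa [show (p i (i ⊔ j) le_sup_left a)⁻¹
          * (p i (i ⊔ j) le_sup_left a * (p j (i ⊔ j) le_sup_right b)⁻¹)⁻¹
          * ((p i (i ⊔ j) le_sup_left a)⁻¹)⁻¹
        = (p i (i ⊔ j) le_sup_left a)⁻¹ * p j (i ⊔ j) le_sup_right b by group] at c
end

section
/- Let θ be a congruence on the Płonka sum A of a semilattice direct system of groups. For each i ∈ I let N i := {a ∈ G i : θ ⟨i,a⟩ ⟨i,1⟩}, where 1 is the identity of G i. Then: (i) S_θ is a semilattice congruence on I; (ii) each N i is a normal subgroup of G i; (iii) for all i, j ∈ I, a ∈ N i implies p_{i,i⊔j}(a) ∈ N (i⊔j), and if (i,j) ∈ S_θ then a ∈ N i if and only if p_{i,i⊔j}(a) ∈ N (i⊔j); (iv) for all i, j ∈ I, a ∈ G i, b ∈ G j: θ ⟨i,a⟩ ⟨j,b⟩ if and only if (i,j) ∈ S_θ and p_{i,i⊔j}(a) · (p_{j,i⊔j}(b))⁻¹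 ∈ N (i⊔j). -/
/-! Płonka sum of a semilattice direct system of groups.

`I` is a join-semilattice, `G i` are groups, and `p i j h : G i →* G j` (for `h : i ≤ j`)
are the transition homomorphisms. The Płonka sum is the sigma type `Σ i, G i` with
multiplication `⟨i,a⟩·⟨j,b⟩ = ⟨i⊔j, p_{i,i⊔j}(a) · p_{j,i⊔j}(b)⟩` and inversion
`⟨i,a⟩⁻¹ = ⟨i,a⁻¹⟩` (a Clifford semigroup). -/

variable {I : Type*} [SemilatticeSup I] {G : I → Type*} [∀ i, Group (G i)]

/-- The class of the identity in the fiber over `i`. -/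
def Nset (θ : (Σ i, G i) → (Σ i, G i) → Prop) (i : I) : Set (G i) :=
  {a : G i | θ ⟨i, a⟩ ⟨i, 1⟩}

section Aux

variable (p : ∀ i j : I, i ≤ j → (G i →* G j))
variable (hid : ∀ (i : I) (h : i ≤ i) (a : G i), p i i h a = a)

include hid

theorem mk_eq_right {i j k : I} (hk : k = j) (h1 : i ≤ k) (h2 : j ≤ k) (h : i ≤ j)
    (a : G i) (b : G j) :
    (⟨k, p i k h1 a * p j k h2 b⟩ : Σ i, G i) = ⟨j, p i j h a * b⟩ := by
  subst hk; rw [hid]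

theorem pmul_right {i j : I} (h : i ≤ j) (a : G i) (b : G j) :
    pmul p ⟨i, a⟩ ⟨j, b⟩ = ⟨j, p i j h a * b⟩ :=
  mk_eq_right p hid (sup_eq_right.mpr h) _ _ h a b

theorem pmul_same {i : I} (a b : G i) :
    pmul p ⟨i, a⟩ ⟨i, b⟩ = ⟨i, a * b⟩ := by
  rw [pmul_right p hid le_rfl, hid]

variable (θ : (Σ i, G i) → (Σ i, G i) → Prop) (hθ : IsCong p θ)

include hθ

theorem srel_one {i j : I} (h : Srel θ i j) : θ ⟨i, 1⟩ ⟨j, 1⟩ := by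
  obtain ⟨a, b, hab⟩ := h
  have h2 : θ ⟨i, a⁻¹⟩ ⟨j, b⁻¹⟩ := hθ.2.2 _ _ hab
  have h3 := hθ.2.1 _ _ _ _ hab h2
  rw [pmul_same p hid, pmul_same p hid, mul_inv_cancel, mul_inv_cancel] at h3
  exact h3

theorem step {i j : I} (h : θ ⟨i, 1⟩ ⟨j, 1⟩) (a : G i) :
    θ ⟨i, a⟩ ⟨i ⊔ j, p i (i ⊔ j) le_sup_left a⟩ := by
  have h3 := hθ.2.1 ⟨i, a⟩ ⟨i, a⟩ ⟨i, 1⟩ ⟨j, 1⟩ (hθ.1.refl _) h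
  have e1 : pmul p ⟨i, a⟩ ⟨i, (1 : G i)⟩ = ⟨i, a⟩ := by
    rw [pmul_same p hid, mul_one]
  have e2 : pmul p ⟨i, a⟩ ⟨j, (1 : G j)⟩ = ⟨i ⊔ j, p i (i ⊔ j) le_sup_left a⟩ := by
    simp [pmul]
  rw [e1, e2] at h3
  exact h3

theorem step' {i j : I} (h : θ ⟨i, 1⟩ ⟨j, 1⟩) (b : G j) :
    θ ⟨j, b⟩ ⟨i ⊔ j, p j (i ⊔ j) le_sup_right b⟩ := by
  have h3 := hθ.2.1 ⟨j, 1⟩ ⟨i, 1⟩ ⟨j, b⟩ ⟨j, b⟩ (hθ.1.symm h) (hθ.1.refl _)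
  have e1 : pmul p ⟨j, (1 : G j)⟩ ⟨j, b⟩ = ⟨j, b⟩ := by
    rw [pmul_same p hid, one_mul]
  have e2 : pmul p ⟨i, (1 : G i)⟩ ⟨j, b⟩ = ⟨i ⊔ j, p j (i ⊔ j) le_sup_right b⟩ := by
    simp [pmul]
  rw [e1, e2] at h3
  exact h3

end Aux

/-- Analysis of a congruence `θ` on the Płonka sum of a semilattice direct system of
groups: (i) `S_θ` is a semilattice congruence on `I`; (ii) each `N i := [1]_{θ_{ii}}` is
(the carrier of) a normal subgroup of `G i`; (iii) the family `N` is compatible with the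
transition maps, with equivalence along pairs in `S_θ`; (iv) `θ` is recovered from
`S_θ` and `N`. -/
theorem congruence_determined_by_normal_subgroups
    (p : ∀ i j : I, i ≤ j → (G i →* G j))
    (hid : ∀ (i : I) (h : i ≤ i) (a : G i), p i i h a = a)
    (hcomp : ∀ (i j k : I) (hij : i ≤ j) (hjk : j ≤ k) (a : G i),
      p j k hjk (p i j hij a) = p i k (hij.trans hjk) a)
    (θ : (Σ i, G i) → (Σ i, G i) → Prop) (hθ : IsCong p θ) :
    -- (i)
    IsSemilatticeCong (Srel θ) ∧
    -- (ii)
    (∀ i : I, ∃ H : Subgroup (G i), H.Normal ∧ (H : Set (G i)) = Nset θ i) ∧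
    -- (iii)
    (∀ (i j : I) (a : G i), a ∈ Nset θ i → p i (i ⊔ j) le_sup_left a ∈ Nset θ (i ⊔ j)) ∧
    (∀ i j : I, Srel θ i j → ∀ a : G i,
      a ∈ Nset θ i ↔ p i (i ⊔ j) le_sup_left a ∈ Nset θ (i ⊔ j)) ∧
    -- (iv)
    (∀ (i j : I) (a : G i) (b : G j),
      θ ⟨i, a⟩ ⟨j, b⟩ ↔ Srel θ i j ∧
        p i (i ⊔ j) le_sup_left a * (p j (i ⊔ j) le_sup_right b)⁻¹ ∈ Nset θ (i ⊔ j)) := by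
  obtain ⟨heq, hmul, hinv⟩ := hθ
  have hθ' : IsCong p θ := ⟨heq, hmul, hinv⟩
  have subN : ∀ (i j : I) (a : G i), a ∈ Nset θ i →
      p i (i ⊔ j) le_sup_left a ∈ Nset θ (i ⊔ j) := by
    intro i j a ha
    have h := hmul ⟨i, a⟩ ⟨i, 1⟩ ⟨i ⊔ j, 1⟩ ⟨i ⊔ j, 1⟩ ha (heq.refl _)
    rw [pmul_right p hid le_sup_left, pmul_right p hid le_sup_left, mul_one, mul_one,
      map_one] at h
    exact h
  refine ⟨⟨⟨fun i => ⟨1, 1, heq.refl _⟩, fun ⟨a, b, h⟩ => ⟨b, a, heq.symm h⟩,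
      ?_⟩, ?_⟩, ?_, subN, ?_, ?_⟩
  · intro i j k hij hjk
    exact ⟨1, 1, heq.trans (srel_one p hid θ hθ' hij) (srel_one p hid θ hθ' hjk)⟩
  · intro i₁ j₁ i₂ j₂ h1 h2
    have h := hmul _ _ _ _ (srel_one p hid θ hθ' h1) (srel_one p hid θ hθ' h2)
    simp only [pmul, map_one, mul_one] at h
    exact ⟨1, 1, h⟩
  · intro i
    refine ⟨⟨⟨⟨Nset θ i, ?_⟩, ?_⟩, ?_⟩, ⟨?_⟩, rfl⟩
    · intro a b ha hb
      have h := hmul ⟨i, a⟩ ⟨i, 1⟩ ⟨i, b⟩ ⟨i, 1⟩ ha hb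
      rw [pmul_same p hid, pmul_same p hid, mul_one] at h
      exact h
    · exact heq.refl _
    · intro a ha
      have h := hinv _ _ ha
      simp only [pinv] at h
      rw [inv_one] at h
      exact h
    · intro a ha g
      have h1 := hmul ⟨i, g⟩ ⟨i, g⟩ ⟨i, a⟩ ⟨i, 1⟩ (heq.refl _) ha
      have h2 := hmul _ _ ⟨i, g⁻¹⟩ ⟨i, g⁻¹⟩ h1 (heq.refl _)
      rw [pmul_same p hid, pmul_same p hid, pmul_same p hid, pmul_same p hid,
        mul_one, mul_inv_cancel] at h2
      exact h2
  · intro i j hij a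
    refine ⟨subN i j a, fun h => ?_⟩
    have hS : θ (⟨i, 1⟩ : Σ i, G i) ⟨j, 1⟩ := srel_one p hid θ hθ' hij
    have h1 := step p hid θ hθ' hS a
    have h0 := step p hid θ hθ' hS 1
    rw [map_one] at h0
    exact heq.trans h1 (heq.trans h (heq.symm h0))
  · intro i j a b
    constructor
    · intro hab
      refine ⟨⟨a, b, hab⟩, ?_⟩
      have hS : θ (⟨i, 1⟩ : Σ i, G i) ⟨j, 1⟩ := srel_one p hid θ hθ' ⟨a, b, hab⟩
      have h1 := step p hid θ hθ' hS a
      have h2 := step' p hid θ hθ' hS b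
      have h3 : θ ⟨i ⊔ j, p i (i ⊔ j) le_sup_left a⟩ ⟨i ⊔ j, p j (i ⊔ j) le_sup_right b⟩ :=
        heq.trans (heq.symm h1) (heq.trans hab h2)
      have h4 := hmul _ _ ⟨i ⊔ j, (p j (i ⊔ j) le_sup_right b)⁻¹⟩
        ⟨i ⊔ j, (p j (i ⊔ j) le_sup_right b)⁻¹⟩ h3 (heq.refl _)
      rw [pmul_same p hid, pmul_same p hid, mul_inv_cancel] at h4
      exact h4
    · rintro ⟨hS, hN⟩
      have hS1 : θ (⟨i, 1⟩ : Σ i, G i) ⟨j, 1⟩ := srel_one p hid θ hθ' hS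
      have h1 := step p hid θ hθ' hS1 a
      have h2 := step' p hid θ hθ' hS1 b
      have h4 := hmul _ _ ⟨i ⊔ j, p j (i ⊔ j) le_sup_right b⟩
        ⟨i ⊔ j, p j (i ⊔ j) le_sup_right b⟩ hN (heq.refl _)
      rw [pmul_same p hid, pmul_same p hid, inv_mul_cancel_right, one_mul] at h4
      exact heq.trans h1 (heq.trans h4 (heq.symm h2))
end

section
/- Let θ and θ' be congruences on the Płonka sum A of a semilattice direct system of groups. Then θ = θ' if and only if S_θ = S_{θ'} and θ_{ii} = θ'_{ii} for every i ∈ I. In other words, a congruence of a Płonka sum is uniquely determined by its index set S_θ together with its pure fibers. -/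
/-! Płonka sum of a semilattice direct system of groups.

`I` is a join-semilattice, `G i` are groups, and `p i j h : G i →* G j` (for `h : i ≤ j`)
are the transition homomorphisms. The Płonka sum is the sigma type `Σ i, G i` with
multiplication `⟨i,a⟩·⟨j,b⟩ = ⟨i⊔j, p_{i,i⊔j}(a) · p_{j,i⊔j}(b)⟩` and inversion
`⟨i,a⟩⁻¹ = ⟨i,a⁻¹⟩` (a Clifford semigroup). -/

variable {I : Type*} [SemilatticeSup I] {G : I → Type*} [∀ i, Group (G i)]

section Aux

variable (p : ∀ i j : I, i ≤ j → (G i →* G j))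

lemma plonka_aux_cast {i m k : I} (hm : m = k) (him : i ≤ m) (hik : i ≤ k) (a : G i) :
    (⟨m, p i m him a⟩ : Σ i, G i) = ⟨k, p i k hik a⟩ := by subst hm; rfl

lemma plonka_aux_one {m k : I} (hm : m = k) : (⟨m, (1 : G m)⟩ : Σ i, G i) = ⟨k, 1⟩ := by
  subst hm; rfl

lemma plonka_pmul_e {i k : I} (h : i ≤ k) (a : G i) :
    pmul p ⟨i, a⟩ ⟨k, 1⟩ = ⟨k, p i k h a⟩ := by
  show (⟨i ⊔ k, p i (i ⊔ k) le_sup_left a * p k (i ⊔ k) le_sup_right 1⟩ : Σ i, G i) = _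
  rw [map_one, mul_one]
  exact plonka_aux_cast p (sup_eq_right.mpr h) le_sup_left h a

lemma plonka_pmul_e_self (hid : ∀ (i : I) (h : i ≤ i) (a : G i), p i i h a = a)
    {i : I} (a : G i) : pmul p ⟨i, a⟩ ⟨i, 1⟩ = ⟨i, a⟩ := by
  rw [plonka_pmul_e p le_rfl a, hid]

lemma plonka_e_mul_e {i j : I} :
    pmul p ⟨i, (1 : G i)⟩ ⟨j, (1 : G j)⟩ = ⟨i ⊔ j, 1⟩ := by
  show (⟨i ⊔ j, p i (i ⊔ j) le_sup_left 1 * p j (i ⊔ j) le_sup_right 1⟩ : Σ i, G i) = _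
  rw [map_one, map_one, mul_one]

lemma plonka_pmul_inv_self {i : I} (a : G i) :
    pmul p ⟨i, a⟩ ⟨i, a⁻¹⟩ = ⟨i, 1⟩ := by
  show (⟨i ⊔ i, p i (i ⊔ i) le_sup_left a * p i (i ⊔ i) le_sup_right a⁻¹⟩ : Σ i, G i) = _
  rw [map_inv]
  show (⟨i ⊔ i, p i (i ⊔ i) le_sup_left a * (p i (i ⊔ i) le_sup_left a)⁻¹⟩ : Σ i, G i) = _
  rw [mul_inv_cancel]
  exact plonka_aux_one (sup_idem i)

lemma plonka_lift_rel (hid : ∀ (i : I) (h : i ≤ i) (a : G i), p i i h a = a)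
    (θ : (Σ i, G i) → (Σ i, G i) → Prop) (heq : Equivalence θ)
    (hmul : ∀ x x' y y', θ x x' → θ y y' → θ (pmul p x y) (pmul p x' y'))
    {i k : I} (h : i ≤ k) (c : θ ⟨i, (1 : G i)⟩ ⟨k, 1⟩) (a : G i) :
    θ ⟨i, a⟩ ⟨k, p i k h a⟩ := by
  have h2 := hmul _ _ _ _ (heq.refl (⟨i, a⟩ : Σ i, G i)) c
  rwa [plonka_pmul_e_self p hid, plonka_pmul_e p h a] at h2

lemma plonka_key (hid : ∀ (i : I) (h : i ≤ i) (a : G i), p i i h a = a)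
    (θ θ' : (Σ i, G i) → (Σ i, G i) → Prop)
    (hθ : IsCong p θ) (hθ' : IsCong p θ')
    (hS : ∀ i j : I, Srel θ i j → Srel θ' i j)
    (hF : ∀ (i : I) (a b : G i), θ ⟨i, a⟩ ⟨i, b⟩ → θ' ⟨i, a⟩ ⟨i, b⟩) :
    ∀ x y, θ x y → θ' x y := by
  obtain ⟨heq, hmul, hinv⟩ := hθ
  obtain ⟨heq', hmul', hinv'⟩ := hθ'
  rintro ⟨i, a⟩ ⟨j, b⟩ h
  -- the idempotents are θ-related
  have cθ : θ ⟨i, (1 : G i)⟩ ⟨j, 1⟩ := by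
    have h2 : θ ⟨i, a⁻¹⟩ ⟨j, b⁻¹⟩ := hinv _ _ h
    have h3 := hmul _ _ _ _ h h2
    rwa [plonka_pmul_inv_self, plonka_pmul_inv_self] at h3
  -- the idempotents are θ'-related
  have cθ' : θ' ⟨i, (1 : G i)⟩ ⟨j, 1⟩ := by
    obtain ⟨a₀, b₀, h₀⟩ := hS i j ⟨a, b, h⟩
    have h2 : θ' ⟨i, a₀⁻¹⟩ ⟨j, b₀⁻¹⟩ := hinv' _ _ h₀
    have h3 := hmul' _ _ _ _ h₀ h2
    rwa [plonka_pmul_inv_self, plonka_pmul_inv_self] at h3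
  -- relate idempotents to the idempotent at i ⊔ j, for both θ and θ'
  have e1 : θ ⟨i, (1 : G i)⟩ ⟨i ⊔ j, 1⟩ := by
    have h3 := hmul _ _ _ _ (heq.refl (⟨i, (1 : G i)⟩ : Σ i, G i)) cθ
    rwa [plonka_pmul_e_self p hid, plonka_e_mul_e] at h3
  have e2 : θ ⟨j, (1 : G j)⟩ ⟨i ⊔ j, 1⟩ := by
    have h3 := hmul _ _ _ _ cθ (heq.refl (⟨j, (1 : G j)⟩ : Σ i, G i))
    rw [plonka_e_mul_e, plonka_pmul_e_self p hid] at h3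
    exact heq.symm h3
  have e1' : θ' ⟨i, (1 : G i)⟩ ⟨i ⊔ j, 1⟩ := by
    have h3 := hmul' _ _ _ _ (heq'.refl (⟨i, (1 : G i)⟩ : Σ i, G i)) cθ'
    rwa [plonka_pmul_e_self p hid, plonka_e_mul_e] at h3
  have e2' : θ' ⟨j, (1 : G j)⟩ ⟨i ⊔ j, 1⟩ := by
    have h3 := hmul' _ _ _ _ cθ' (heq'.refl (⟨j, (1 : G j)⟩ : Σ i, G i))
    rw [plonka_e_mul_e, plonka_pmul_e_self p hid] at h3
    exact heq'.symm h3
  -- lift the elements into the fiber at i ⊔ j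
  have t1 := plonka_lift_rel p hid θ heq hmul le_sup_left e1 a
  have t2 := plonka_lift_rel p hid θ heq hmul le_sup_right e2 b
  have t1' := plonka_lift_rel p hid θ' heq' hmul' le_sup_left e1' a
  have t2' := plonka_lift_rel p hid θ' heq' hmul' le_sup_right e2' b
  have mid : θ ⟨i ⊔ j, p i (i ⊔ j) le_sup_left a⟩ ⟨i ⊔ j, p j (i ⊔ j) le_sup_right b⟩ :=
    heq.trans (heq.symm t1) (heq.trans h t2)
  have mid' := hF _ _ _ mid
  exact heq'.trans t1' (heq'.trans mid' (heq'.symm t2'))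

end Aux

/-- A congruence of a Płonka sum of groups is uniquely determined by its index set `S_θ`
together with its pure fibers `θ_{ii}`. -/
theorem congruence_determined_by_Srel_and_pure_fibers
    (p : ∀ i j : I, i ≤ j → (G i →* G j))
    (hid : ∀ (i : I) (h : i ≤ i) (a : G i), p i i h a = a)
    (hcomp : ∀ (i j k : I) (hij : i ≤ j) (hjk : j ≤ k) (a : G i),
      p j k hjk (p i j hij a) = p i k (hij.trans hjk) a)
    (θ θ' : (Σ i, G i) → (Σ i, G i) → Prop)
    (hθ : IsCong p θ) (hθ' : IsCong p θ') :
    θ = θ' ↔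
      ((∀ i j : I, Srel θ i j ↔ Srel θ' i j) ∧
        (∀ (i : I) (a b : G i), θ ⟨i, a⟩ ⟨i, b⟩ ↔ θ' ⟨i, a⟩ ⟨i, b⟩)) := by
  constructor
  · rintro rfl
    exact ⟨fun i j => Iff.rfl, fun i a b => Iff.rfl⟩
  · rintro ⟨hS, hF⟩
    funext x y
    exact propext
      ⟨plonka_key p hid θ θ' hθ hθ' (fun i j => (hS i j).mp) (fun i a b => (hF i a b).mp) x y,
        plonka_key p hid θ' θ hθ' hθ (fun i j => (hS i j).mpr) (fun i a b => (hF i a b).mpr) x y⟩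
end

section
/- Let θ₁ and θ₂ be permutable congruences on the Płonka sum A of a semilattice direct system of groups, i.e. θ₁ ∘ θ₂ = θ₂ ∘ θ₁ where ∘ is relational composition. Then: (i) S_{θ₁ ∘ θ₂} ⊆ S_{θ₁} ∘ S_{θ₂}; (ii) C_{θ₁} ∘ C_{θ₂} ⊆ C_{θ₁ ∘ θ₂}; (iii) for every i ∈ I and a, c ∈ G i: (a,c) ∈ (θ₁ ∘ θ₂)_{ii} if and only if there exist j ∈ I with (i,j) ∈ S_{θ₁} and (i,j) ∈ S_{θ₂}, and b ∈ G j such that (a,b) ∈ (θ₁)_{ij} and (b,c) ∈ (θ₂)_{ji}. -/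
/-! Płonka sum of a semilattice direct system of groups.

`I` is a join-semilattice, `G i` are groups, and `p i j h : G i →* G j` (for `h : i ≤ j`)
are the transition homomorphisms. The Płonka sum is the sigma type `Σ i, G i` with
multiplication `⟨i,a⟩·⟨j,b⟩ = ⟨i⊔j, p_{i,i⊔j}(a) · p_{j,i⊔j}(b)⟩` and inversion
`⟨i,a⟩⁻¹ = ⟨i,a⁻¹⟩` (a Clifford semigroup). -/

variable {I : Type*} [SemilatticeSup I] {G : I → Type*} [∀ i, Group (G i)]

set_option linter.unusedSectionVars false

lemma sigma_one_eq {i j : I} (h : i = j) : (⟨i, (1 : G i)⟩ : Σ i, G i) = ⟨j, 1⟩ := by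
  subst h; rfl

lemma sigma_p_eq (p : ∀ i j : I, i ≤ j → (G i →* G j))
    (hid : ∀ (i : I) (h : i ≤ i) (a : G i), p i i h a = a)
    {i j : I} (h : i = j) (hle : i ≤ j) (a : G i) :
    (⟨j, p i j hle a⟩ : Σ i, G i) = ⟨i, a⟩ := by
  subst h; rw [hid]

lemma cong_one (p : ∀ i j : I, i ≤ j → (G i →* G j)) {θ} (hθ : IsCong p θ)
    {i k : I} {a : G i} {b : G k} (r : θ ⟨i, a⟩ ⟨k, b⟩) :
    θ ⟨i, (1 : G i)⟩ ⟨k, 1⟩ := by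
  have h := hθ.2.1 _ _ _ _ r (hθ.2.2 _ _ r)
  have e1 : pmul p ⟨i, a⟩ (pinv ⟨i, a⟩) = ⟨i, 1⟩ := by
    show (⟨i ⊔ i, p i (i ⊔ i) le_sup_left a * p i (i ⊔ i) le_sup_right a⁻¹⟩ : Σ i, G i) = _
    rw [show (p i (i ⊔ i) le_sup_left a * p i (i ⊔ i) le_sup_right a⁻¹ = 1) by
      rw [map_inv, mul_inv_cancel]]
    exact sigma_one_eq (sup_idem i)
  have e2 : pmul p ⟨k, b⟩ (pinv ⟨k, b⟩) = ⟨k, 1⟩ := by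
    show (⟨k ⊔ k, p k (k ⊔ k) le_sup_left b * p k (k ⊔ k) le_sup_right b⁻¹⟩ : Σ i, G i) = _
    rw [show (p k (k ⊔ k) le_sup_left b * p k (k ⊔ k) le_sup_right b⁻¹ = 1) by
      rw [map_inv, mul_inv_cancel]]
    exact sigma_one_eq (sup_idem k)
  rwa [e1, e2] at h

lemma cong_sup (p : ∀ i j : I, i ≤ j → (G i →* G j)) {θ} (hθ : IsCong p θ)
    {i j i' j' : I} (h : θ ⟨i, (1 : G i)⟩ ⟨j, 1⟩) (h' : θ ⟨i', (1 : G i')⟩ ⟨j', 1⟩) :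
    θ ⟨i ⊔ i', (1 : G (i ⊔ i'))⟩ ⟨j ⊔ j', 1⟩ := by
  have hh := hθ.2.1 _ _ _ _ h h'
  have e : ∀ (u v : I), pmul p ⟨u, (1 : G u)⟩ ⟨v, (1 : G v)⟩ = ⟨u ⊔ v, 1⟩ := by
    intro u v
    show (⟨u ⊔ v, p u (u ⊔ v) le_sup_left 1 * p v (u ⊔ v) le_sup_right 1⟩ : Σ i, G i) = _
    rw [show (p u (u ⊔ v) le_sup_left 1 * p v (u ⊔ v) le_sup_right 1 = 1) by simp]
  rwa [e, e] at hh

lemma cong_step (p : ∀ i j : I, i ≤ j → (G i →* G j))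
    (hid : ∀ (i : I) (h : i ≤ i) (a : G i), p i i h a = a)
    {θ} (hθ : IsCong p θ)
    {i k : I} {a : G i} {b : G k} (r : θ ⟨i, a⟩ ⟨k, b⟩) :
    θ ⟨i, a⟩ ⟨i ⊔ k, p i (i ⊔ k) le_sup_left a⟩ := by
  have h1 := cong_one p hθ r
  have hh := hθ.2.1 ⟨i, a⟩ ⟨i, a⟩ _ _ (hθ.1.refl _) h1
  have e1 : pmul p ⟨i, a⟩ ⟨i, (1 : G i)⟩ = ⟨i, a⟩ := by
    show (⟨i ⊔ i, p i (i ⊔ i) le_sup_left a * p i (i ⊔ i) le_sup_right 1⟩ : Σ i, G i) = _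
    rw [show (p i (i ⊔ i) le_sup_left a * p i (i ⊔ i) le_sup_right 1
        = p i (i ⊔ i) le_sup_left a) by simp]
    exact sigma_p_eq p hid (sup_idem i).symm _ a
  have e2 : pmul p ⟨i, a⟩ ⟨k, (1 : G k)⟩ = ⟨i ⊔ k, p i (i ⊔ k) le_sup_left a⟩ := by
    show (⟨i ⊔ k, p i (i ⊔ k) le_sup_left a * p k (i ⊔ k) le_sup_right 1⟩ : Σ i, G i) = _
    rw [show (p i (i ⊔ k) le_sup_left a * p k (i ⊔ k) le_sup_right 1
        = p i (i ⊔ k) le_sup_left a) by simp]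
  rwa [e1, e2] at hh

/-- For permutable congruences `θ₁, θ₂` on the Płonka sum of a semilattice direct system
of groups: (i) `S_{θ₁ ∘ θ₂} ⊆ S_{θ₁} ∘ S_{θ₂}`; (ii) `C_{θ₁} ∘ C_{θ₂} ⊆ C_{θ₁ ∘ θ₂}`;
(iii) the pure fibers of `θ₁ ∘ θ₂` are unions of composites of mixed fibers over indices
`j` with `(i,j) ∈ S_{θ₁} ∩ S_{θ₂}`. -/
theorem composition_of_permutable_congruences
    (p : ∀ i j : I, i ≤ j → (G i →* G j))
    (hid : ∀ (i : I) (h : i ≤ i) (a : G i), p i i h a = a)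
    (hcomp : ∀ (i j k : I) (hij : i ≤ j) (hjk : j ≤ k) (a : G i),
      p j k hjk (p i j hij a) = p i k (hij.trans hjk) a)
    (θ₁ θ₂ : (Σ i, G i) → (Σ i, G i) → Prop)
    (hθ₁ : IsCong p θ₁) (hθ₂ : IsCong p θ₂)
    (hperm : ∀ x y : Σ i, G i, Relation.Comp θ₁ θ₂ x y ↔ Relation.Comp θ₂ θ₁ x y) :
    -- (i)
    (∀ i j : I, Srel (Relation.Comp θ₁ θ₂) i j → Relation.Comp (Srel θ₁) (Srel θ₂) i j) ∧
    -- (ii)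
    (∀ i j : I, Relation.Comp (Crel θ₁) (Crel θ₂) i j → Crel (Relation.Comp θ₁ θ₂) i j) ∧
    -- (iii)
    (∀ (i : I) (a c : G i),
      Relation.Comp θ₁ θ₂ ⟨i, a⟩ ⟨i, c⟩ ↔
        ∃ j : I, Srel θ₁ i j ∧ Srel θ₂ i j ∧
          ∃ b : G j, θ₁ ⟨i, a⟩ ⟨j, b⟩ ∧ θ₂ ⟨j, b⟩ ⟨i, c⟩) := by
  refine ⟨?_, ?_, ?_⟩
  · -- (i)
    rintro i j ⟨a, b, z, h1, h2⟩
    exact ⟨z.1, ⟨a, z.2, h1⟩, ⟨z.2, b, h2⟩⟩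
  · -- (ii)
    rintro i j ⟨k, ⟨hik, hki⟩, hkj, hjk⟩
    obtain ⟨_, _, hik⟩ := hik
    obtain ⟨_, _, hki⟩ := hki
    obtain ⟨_, _, hkj⟩ := hkj
    obtain ⟨_, _, hjk⟩ := hjk
    have E1ik : θ₁ ⟨i, 1⟩ ⟨i ⊔ k, 1⟩ := cong_one p hθ₁ hik
    have E1k : θ₁ ⟨k, 1⟩ ⟨i ⊔ k, 1⟩ := cong_one p hθ₁ hki
    have E2k : θ₂ ⟨k, 1⟩ ⟨k ⊔ j, 1⟩ := cong_one p hθ₂ hkj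
    have E2j : θ₂ ⟨j, 1⟩ ⟨k ⊔ j, 1⟩ := cong_one p hθ₂ hjk
    have E2ik : θ₂ ⟨i ⊔ k, 1⟩ ⟨i ⊔ (k ⊔ j), 1⟩ :=
      cong_sup p hθ₂ (hθ₂.1.refl ⟨i, 1⟩) E2k
    have E2ij : θ₂ ⟨i ⊔ j, 1⟩ ⟨i ⊔ (k ⊔ j), 1⟩ :=
      cong_sup p hθ₂ (hθ₂.1.refl ⟨i, 1⟩) E2j
    have E2 : θ₂ ⟨i ⊔ k, 1⟩ ⟨i ⊔ j, 1⟩ := hθ₂.1.trans E2ik (hθ₂.1.symm E2ij)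
    have E1kj : θ₁ ⟨k ⊔ j, 1⟩ ⟨(i ⊔ k) ⊔ j, 1⟩ :=
      cong_sup p hθ₁ E1k (hθ₁.1.refl ⟨j, 1⟩)
    have E1ij : θ₁ ⟨i ⊔ j, 1⟩ ⟨(i ⊔ k) ⊔ j, 1⟩ := by
      have := cong_sup p hθ₁ E1ik (hθ₁.1.refl ⟨j, 1⟩)
      -- this : θ₁ ⟨i ⊔ j, 1⟩ ⟨(i ⊔ k) ⊔ j, 1⟩
      exact this
    have E1 : θ₁ ⟨k ⊔ j, 1⟩ ⟨i ⊔ j, 1⟩ := hθ₁.1.trans E1kj (hθ₁.1.symm E1ij)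
    constructor
    · exact ⟨1, 1, ⟨i ⊔ k, 1⟩, E1ik, E2⟩
    · have hc : Relation.Comp θ₁ θ₂ ⟨j, 1⟩ ⟨i ⊔ j, 1⟩ :=
        (hperm _ _).2 ⟨⟨k ⊔ j, 1⟩, E2j, E1⟩
      exact ⟨1, 1, hc⟩
  · -- (iii)
    intro i a c
    constructor
    · rintro ⟨⟨k, y⟩, h1, h2⟩
      have s1 : θ₁ ⟨k, y⟩ ⟨k ⊔ i, p k (k ⊔ i) le_sup_left y⟩ :=
        cong_step p hid hθ₁ (hθ₁.1.symm h1)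
      have s2 : θ₂ ⟨k, y⟩ ⟨k ⊔ i, p k (k ⊔ i) le_sup_left y⟩ :=
        cong_step p hid hθ₂ h2
      have hb1 : θ₁ ⟨i, a⟩ ⟨k ⊔ i, p k (k ⊔ i) le_sup_left y⟩ := hθ₁.1.trans h1 s1
      have hb2 : θ₂ ⟨k ⊔ i, p k (k ⊔ i) le_sup_left y⟩ ⟨i, c⟩ :=
        hθ₂.1.trans (hθ₂.1.symm s2) h2
      exact ⟨k ⊔ i, ⟨a, _, hb1⟩, ⟨c, _, hθ₂.1.symm hb2⟩, _, hb1, hb2⟩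
    · rintro ⟨j, _, _, b, h1, h2⟩
      exact ⟨⟨j, b⟩, h1, h2⟩
end

section
/- Let θ₁ and θ₂ be congruences on the Płonka sum A of a semilattice direct system of groups. Then the following are equivalent: (1) (θ₁, θ₂) is a pair of factor congruences on A, i.e. θ₁ ∩ θ₂ is the diagonal of A and θ₁ ∘ θ₂ = θ₂ ∘ θ₁ = A × A; (2) θ₁ ∘ θ₂ = θ₂ ∘ θ₁, the pair (C_{θ₁}, C_{θ₂}) is a pair of factor congruences on the semilattice I (i.e. C_{θ₁} ∩ C_{θ₂} is the diagonal of I and C_{θ₁} ∘ C_{θ₂} = C_{θ₂} ∘ C_{θ₁} = I × I), and for every i ∈ I the pair ((θ₁)_{ii}, (θ₂)_{ii}) is a pair of factor congruences on the group G i (i.e. their intersection is the diagonal of G i and their compositions in either order equal G i × G i). -/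
/-! Płonka sum of a semilattice direct system of groups.

`I` is a join-semilattice, `G i` are groups, and `p i j h : G i →* G j` (for `h : i ≤ j`)
are the transition homomorphisms. The Płonka sum is the sigma type `Σ i, G i` with
multiplication `⟨i,a⟩·⟨j,b⟩ = ⟨i⊔j, p_{i,i⊔j}(a) · p_{j,i⊔j}(b)⟩` and inversion
`⟨i,a⟩⁻¹ = ⟨i,a⁻¹⟩` (a Clifford semigroup). -/

variable {I : Type*} [SemilatticeSup I] {G : I → Type*} [∀ i, Group (G i)]

section Aux

variable (p : ∀ i j : I, i ≤ j → (G i →* G j))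

/-- The idempotent `⟨i, 1⟩` of the Płonka sum. -/
def pe (i : I) : Σ i, G i := ⟨i, 1⟩

lemma pe_mul (i j : I) : pmul p (pe i) (pe j) = pe (i ⊔ j) := by
  show (⟨i ⊔ j, p i (i ⊔ j) le_sup_left 1 * p j (i ⊔ j) le_sup_right 1⟩ : Σ i, G i) = _
  rw [map_one, map_one, mul_one]; rfl

lemma mk_p_congr_s18 {i j k : I} (h1 : i ≤ j) (h2 : i ≤ k) (hjk : j = k) (a : G i) :
    (⟨j, p i j h1 a⟩ : Σ i, G i) = ⟨k, p i k h2 a⟩ := by subst hjk; rfl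

variable (hid : ∀ (i : I) (h : i ≤ i) (a : G i), p i i h a = a)
include hid

lemma mk_p_down {i j : I} (h : i ≤ j) (hji : j ≤ i) (a : G i) :
    (⟨j, p i j h a⟩ : Σ i, G i) = ⟨i, a⟩ := by
  have hj : j = i := le_antisymm hji h
  subst hj; rw [hid]

lemma pmul_pinv (x : Σ i, G i) : pmul p x (pinv x) = pe x.1 := by
  obtain ⟨i, a⟩ := x
  have h2 : pmul p (⟨i, a⟩ : Σ i, G i) (pinv ⟨i, a⟩) = ⟨i ⊔ i, p i (i ⊔ i) le_sup_left 1⟩ := by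
    show (⟨i ⊔ i, p i (i ⊔ i) le_sup_left a * p i (i ⊔ i) le_sup_right a⁻¹⟩ : Σ i, G i) = _
    exact congrArg (Sigma.mk (i ⊔ i)) (by rw [← map_mul, mul_inv_cancel])
  rw [h2]
  exact mk_p_down p hid _ (sup_idem i).le 1

lemma mul_pe_self {i : I} (a : G i) : pmul p (⟨i, a⟩ : Σ i, G i) (pe i) = ⟨i, a⟩ := by
  have h2 : pmul p (⟨i, a⟩ : Σ i, G i) (pe i) = ⟨i ⊔ i, p i (i ⊔ i) le_sup_left a⟩ := by
    show (⟨i ⊔ i, p i (i ⊔ i) le_sup_left a * p i (i ⊔ i) le_sup_right 1⟩ : Σ i, G i) = _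
    exact congrArg (Sigma.mk (i ⊔ i)) (by rw [map_one, mul_one])
  rw [h2]
  exact mk_p_down p hid _ (sup_idem i).le a

omit hid in
lemma pe_mul_mk {i j : I} (a : G i) :
    pmul p (pe j) (⟨i, a⟩ : Σ i, G i) = ⟨j ⊔ i, p i (j ⊔ i) le_sup_right a⟩ := by
  show (⟨j ⊔ i, p j (j ⊔ i) le_sup_left 1 * p i (j ⊔ i) le_sup_right a⟩ : Σ i, G i) = _
  rw [map_one, one_mul]

variable {θ : (Σ i, G i) → (Σ i, G i) → Prop} (hθ : IsCong p θ)
include hθ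

lemma theta_pe {x y : Σ i, G i} (h : θ x y) : θ (pe x.1) (pe y.1) := by
  have h2 := hθ.2.1 x y (pinv x) (pinv y) h (hθ.2.2 x y h)
  rwa [pmul_pinv p hid, pmul_pinv p hid] at h2

omit hid in
lemma theta_pe_sup {i j i' j' : I} (h : θ (pe i) (pe j)) (h' : θ (pe i') (pe j')) :
    θ (pe (i ⊔ i')) (pe (j ⊔ j')) := by
  have h2 := hθ.2.1 _ _ _ _ h h'
  rwa [pe_mul, pe_mul] at h2

omit hid in
lemma theta_pe_sup_left {i j : I} (h : θ (pe i) (pe j)) : θ (pe i) (pe (i ⊔ j)) := by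
  have h2 := theta_pe_sup p hθ (hθ.1.refl (pe i)) h
  rwa [sup_idem] at h2

lemma theta_up {i s : I} (his : i ≤ s) (h : θ (pe i) (pe s)) (a : G i) :
    θ ⟨i, a⟩ ⟨s, p i s his a⟩ := by
  have h2 := hθ.2.1 _ _ _ _ h (hθ.1.refl (⟨i, a⟩ : Σ i, G i))
  rw [pe_mul_mk, pe_mul_mk] at h2
  rw [mk_p_down p hid le_sup_right (sup_idem i).le a] at h2
  rwa [mk_p_congr_s18 p le_sup_right his (sup_eq_left.mpr his)] at h2

lemma crel_iff (i j : I) : Crel θ i j ↔ θ (pe i) (pe j) := by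
  constructor
  · rintro ⟨⟨a, b, h1⟩, ⟨c, d, h2⟩⟩
    exact hθ.1.trans (theta_pe p hid hθ h1) (hθ.1.symm (theta_pe p hid hθ h2))
  · intro h
    have h1 : θ (pe i) (pe (i ⊔ j)) := theta_pe_sup_left p hθ h
    have h2 : θ (pe j) (pe (i ⊔ j)) := by
      have := theta_pe_sup_left p hθ (hθ.1.symm h)
      rwa [sup_comm j i] at this
    exact ⟨⟨1, 1, h1⟩, ⟨1, 1, h2⟩⟩

end Aux

section MainAux

variable (p : ∀ i j : I, i ≤ j → (G i →* G j))
variable (hid : ∀ (i : I) (h : i ≤ i) (a : G i), p i i h a = a)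
variable {θ₁ θ₂ : (Σ i, G i) → (Σ i, G i) → Prop}

/-- Transitivity of the composition of permuting transitive relations. -/
lemma comp_trans {α : Type*} {r s : α → α → Prop}
    (tr : ∀ x y z : α, r x y → r y z → r x z)
    (ts : ∀ x y z : α, s x y → s y z → s x z)
    (perm : ∀ x y, Relation.Comp s r x y → Relation.Comp r s x y)
    {x y z : α} (h1 : Relation.Comp r s x y) (h2 : Relation.Comp r s y z) :
    Relation.Comp r s x z := by
  obtain ⟨u, hxu, huy⟩ := h1
  obtain ⟨v, hyv, hvz⟩ := h2
  obtain ⟨w, huw, hwv⟩ := perm u v ⟨y, huy, hyv⟩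
  exact ⟨w, tr _ _ _ hxu huw, ts _ _ _ hwv hvz⟩

include hid

/-- Forward: fullness of the composition of factor congruences descends to fibers. -/
lemma fiber_comp_aux (hθ₁ : IsCong p θ₁) (hθ₂ : IsCong p θ₂)
    (hdiag : ∀ x y : Σ i, G i, (θ₁ x y ∧ θ₂ x y) ↔ x = y)
    (h12 : ∀ x y : Σ i, G i, Relation.Comp θ₁ θ₂ x y)
    (h21 : ∀ x y : Σ i, G i, Relation.Comp θ₂ θ₁ x y)
    (i : I) (a b : G i) :
    Relation.Comp (fun a' b' : G i => θ₁ ⟨i, a'⟩ ⟨i, b'⟩)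
      (fun a' b' : G i => θ₂ ⟨i, a'⟩ ⟨i, b'⟩) a b := by
  obtain ⟨z, hz1, hz2⟩ := h12 ⟨i, a⟩ ⟨i, b⟩
  have hz1' : θ₁ ⟨i, a⟩ (pmul p z (pe i)) := by
    have := hθ₁.2.1 _ _ _ _ hz1 (hθ₁.1.refl (pe i))
    rwa [mul_pe_self p hid] at this
  have hz2' : θ₂ (pmul p z (pe i)) ⟨i, b⟩ := by
    have := hθ₂.2.1 _ _ _ _ hz2 (hθ₂.1.refl (pe i))
    rwa [mul_pe_self p hid] at this
  rcases hzz : pmul p z (pe i) with ⟨m, c⟩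
  rw [hzz] at hz1' hz2'
  have hfst : z.1 ⊔ i = m := congrArg Sigma.fst hzz
  have him : i ≤ m := hfst ▸ le_sup_right
  have e1 : θ₁ (pe i) (pe m) := theta_pe p hid hθ₁ hz1'
  have e2 : θ₂ (pe m) (pe i) := theta_pe p hid hθ₂ hz2'
  obtain ⟨w, hw1, hw2⟩ := h21 (pe i) (pe i)
  have f1 : θ₂ (pe i) (pe w.1) := theta_pe p hid hθ₂ hw1
  have f2 : θ₁ (pe w.1) (pe i) := theta_pe p hid hθ₁ hw2
  have g1 : θ₁ (pe (m ⊔ w.1)) (pe i) := by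
    have := theta_pe_sup p hθ₁ (hθ₁.1.symm e1) f2
    rwa [sup_idem] at this
  have g2 : θ₂ (pe (m ⊔ w.1)) (pe i) := by
    have := theta_pe_sup p hθ₂ e2 (hθ₂.1.symm f1)
    rwa [sup_idem] at this
  have hui : m ⊔ w.1 = i := congrArg Sigma.fst ((hdiag _ _).mp ⟨g1, g2⟩)
  have hmi : m = i := le_antisymm (le_trans le_sup_left hui.le) him
  subst hmi
  exact ⟨c, hz1', hz2'⟩

/-- Backward: fullness of the composition on the Płonka sum. -/
lemma full_aux (hθ₁ : IsCong p θ₁) (hθ₂ : IsCong p θ₂)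
    (perm : ∀ x y : Σ i, G i, Relation.Comp θ₁ θ₂ x y ↔ Relation.Comp θ₂ θ₁ x y)
    (Cfull : ∀ i j : I, Relation.Comp (Crel θ₁) (Crel θ₂) i j)
    (ffull : ∀ (i : I) (a b : G i),
      Relation.Comp (fun a' b' : G i => θ₁ ⟨i, a'⟩ ⟨i, b'⟩)
        (fun a' b' : G i => θ₂ ⟨i, a'⟩ ⟨i, b'⟩) a b)
    (x y : Σ i, G i) : Relation.Comp θ₁ θ₂ x y := by
  obtain ⟨i, a⟩ := x; obtain ⟨j, b⟩ := y
  obtain ⟨k, hc1, hc2⟩ := Cfull i j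
  have h1 : θ₁ (pe i) (pe k) := (crel_iff p hid hθ₁ i k).mp hc1
  have h2 : θ₂ (pe k) (pe j) := (crel_iff p hid hθ₂ k j).mp hc2
  have hmk : (i ⊔ k) ⊔ k = i ⊔ k := by apply le_antisymm <;> simp
  have hnk : (j ⊔ k) ⊔ k = j ⊔ k := by apply le_antisymm <;> simp
  have hms : (i ⊔ k) ⊔ j = (i ⊔ k) ⊔ (j ⊔ k) := by
    apply le_antisymm <;> simp <;>
      first
        | exact le_sup_right.trans le_sup_right
        | exact le_sup_left.trans le_sup_left
        | exact le_sup_right.trans le_sup_left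
        | exact le_sup_left.trans le_sup_right
  have hns : (j ⊔ k) ⊔ i = (i ⊔ k) ⊔ (j ⊔ k) := by
    apply le_antisymm <;> simp <;>
      first
        | exact le_sup_right.trans le_sup_right
        | exact le_sup_left.trans le_sup_left
        | exact le_sup_right.trans le_sup_left
        | exact le_sup_left.trans le_sup_right
  have em : θ₁ (pe i) (pe (i ⊔ k)) := theta_pe_sup_left p hθ₁ h1
  have ems : θ₂ (pe (i ⊔ k)) (pe ((i ⊔ k) ⊔ (j ⊔ k))) := by
    have := theta_pe_sup p hθ₂ (hθ₂.1.refl (pe (i ⊔ k))) h2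
    rwa [hmk, hms] at this
  have en : θ₂ (pe j) (pe (j ⊔ k)) := theta_pe_sup_left p hθ₂ (hθ₂.1.symm h2)
  have ens : θ₁ (pe (j ⊔ k)) (pe ((i ⊔ k) ⊔ (j ⊔ k))) := by
    have := theta_pe_sup p hθ₁ (hθ₁.1.refl (pe (j ⊔ k))) (hθ₁.1.symm h1)
    rwa [hnk, hns] at this
  have c1 : θ₁ ⟨i, a⟩ ⟨i ⊔ k, p i (i ⊔ k) le_sup_left a⟩ :=
    theta_up p hid hθ₁ le_sup_left em a
  have c2 := theta_up p hid hθ₂ (le_sup_left : i ⊔ k ≤ (i ⊔ k) ⊔ (j ⊔ k)) ems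
    (p i (i ⊔ k) le_sup_left a)
  have d1 : θ₂ ⟨j, b⟩ ⟨j ⊔ k, p j (j ⊔ k) le_sup_left b⟩ :=
    theta_up p hid hθ₂ le_sup_left en b
  have d2 := theta_up p hid hθ₁ (le_sup_right : j ⊔ k ≤ (i ⊔ k) ⊔ (j ⊔ k)) ens
    (p j (j ⊔ k) le_sup_left b)
  obtain ⟨c, f1, f2⟩ := ffull ((i ⊔ k) ⊔ (j ⊔ k)) _ _
  have tr₁ : ∀ x y z : Σ i, G i, θ₁ x y → θ₁ y z → θ₁ x z := fun _ _ _ h h' => hθ₁.1.trans h h'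
  have tr₂ : ∀ x y z : Σ i, G i, θ₂ x y → θ₂ y z → θ₂ x z := fun _ _ _ h h' => hθ₂.1.trans h h'
  have pm : ∀ x y : Σ i, G i, Relation.Comp θ₂ θ₁ x y → Relation.Comp θ₁ θ₂ x y :=
    fun x y h => (perm x y).mpr h
  exact comp_trans tr₁ tr₂ pm
    (comp_trans tr₁ tr₂ pm ⟨_, c1, c2⟩ ⟨_, f1, f2⟩)
    ⟨_, hθ₁.1.symm d2, hθ₂.1.symm d1⟩

end MainAux

/-- Characterization of factor congruences on the Płonka sum of a semilattice direct
system of groups: `(θ₁, θ₂)` is a pair of factor congruences on `A` iff `θ₁`, `θ₂`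
permute, `(C_{θ₁}, C_{θ₂})` is a pair of factor congruences on the semilattice `I`, and
for every `i` the pure fibers `((θ₁)_{ii}, (θ₂)_{ii})` are a pair of factor congruences
on the group `G i`. -/
theorem factor_congruences_characterization
    (p : ∀ i j : I, i ≤ j → (G i →* G j))
    (hid : ∀ (i : I) (h : i ≤ i) (a : G i), p i i h a = a)
    (hcomp : ∀ (i j k : I) (hij : i ≤ j) (hjk : j ≤ k) (a : G i),
      p j k hjk (p i j hij a) = p i k (hij.trans hjk) a)
    (θ₁ θ₂ : (Σ i, G i) → (Σ i, G i) → Prop)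
    (hθ₁ : IsCong p θ₁) (hθ₂ : IsCong p θ₂) :
    -- (1): (θ₁, θ₂) is a pair of factor congruences on the Płonka sum
    ((∀ x y : Σ i, G i, (θ₁ x y ∧ θ₂ x y) ↔ x = y) ∧
      (∀ x y : Σ i, G i, Relation.Comp θ₁ θ₂ x y) ∧
      (∀ x y : Σ i, G i, Relation.Comp θ₂ θ₁ x y))
    ↔
    -- (2): θ₁, θ₂ permute, (C_{θ₁}, C_{θ₂}) is a pair of factor congruences on I, and
    -- each ((θ₁)_{ii}, (θ₂)_{ii}) is a pair of factor congruences on G i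
    ((∀ x y : Σ i, G i, Relation.Comp θ₁ θ₂ x y ↔ Relation.Comp θ₂ θ₁ x y) ∧
      ((∀ i j : I, (Crel θ₁ i j ∧ Crel θ₂ i j) ↔ i = j) ∧
        (∀ i j : I, Relation.Comp (Crel θ₁) (Crel θ₂) i j) ∧
        (∀ i j : I, Relation.Comp (Crel θ₂) (Crel θ₁) i j)) ∧
      (∀ i : I,
        (∀ a b : G i, (θ₁ ⟨i, a⟩ ⟨i, b⟩ ∧ θ₂ ⟨i, a⟩ ⟨i, b⟩) ↔ a = b) ∧
        (∀ a b : G i, Relation.Comp (fun a' b' : G i => θ₁ ⟨i, a'⟩ ⟨i, b'⟩)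
          (fun a' b' : G i => θ₂ ⟨i, a'⟩ ⟨i, b'⟩) a b) ∧
        (∀ a b : G i, Relation.Comp (fun a' b' : G i => θ₂ ⟨i, a'⟩ ⟨i, b'⟩)
          (fun a' b' : G i => θ₁ ⟨i, a'⟩ ⟨i, b'⟩) a b))) := by
  constructor
  · rintro ⟨hdiag, h12, h21⟩
    refine ⟨fun x y => iff_of_true (h12 x y) (h21 x y), ⟨?_, ?_, ?_⟩, fun i => ⟨?_, ?_, ?_⟩⟩
    · -- C diag
      intro i j
      constructor
      · rintro ⟨hc1, hc2⟩
        have e1 := (crel_iff p hid hθ₁ i j).mp hc1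
        have e2 := (crel_iff p hid hθ₂ i j).mp hc2
        exact congrArg Sigma.fst ((hdiag _ _).mp ⟨e1, e2⟩)
      · rintro rfl
        exact ⟨(crel_iff p hid hθ₁ i i).mpr (hθ₁.1.refl _),
          (crel_iff p hid hθ₂ i i).mpr (hθ₂.1.refl _)⟩
    · -- C comp 12
      intro i j
      obtain ⟨z, hz1, hz2⟩ := h12 (pe i) (pe j)
      exact ⟨z.1, (crel_iff p hid hθ₁ i z.1).mpr (theta_pe p hid hθ₁ hz1),
        (crel_iff p hid hθ₂ z.1 j).mpr (theta_pe p hid hθ₂ hz2)⟩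
    · -- C comp 21
      intro i j
      obtain ⟨z, hz1, hz2⟩ := h21 (pe i) (pe j)
      exact ⟨z.1, (crel_iff p hid hθ₂ i z.1).mpr (theta_pe p hid hθ₂ hz1),
        (crel_iff p hid hθ₁ z.1 j).mpr (theta_pe p hid hθ₁ hz2)⟩
    · -- fiber diag
      intro a b
      constructor
      · rintro ⟨e1, e2⟩
        exact sigma_mk_injective ((hdiag _ _).mp ⟨e1, e2⟩)
      · rintro rfl
        exact ⟨hθ₁.1.refl _, hθ₂.1.refl _⟩
    · -- fiber comp 12
      exact fun a b => fiber_comp_aux p hid hθ₁ hθ₂ hdiag h12 h21 _ a b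
    · -- fiber comp 21
      exact fun a b => fiber_comp_aux p hid hθ₂ hθ₁
        (fun x y => (and_comm.trans (hdiag x y))) h21 h12 _ a b
  · rintro ⟨perm, ⟨Cdiag, Cfull12, Cfull21⟩, hfib⟩
    have full12 : ∀ x y : Σ i, G i, Relation.Comp θ₁ θ₂ x y :=
      full_aux p hid hθ₁ hθ₂ perm Cfull12 (fun i a b => (hfib i).2.1 a b)
    have full21 : ∀ x y : Σ i, G i, Relation.Comp θ₂ θ₁ x y :=
      full_aux p hid hθ₂ hθ₁ (fun x y => (perm x y).symm) Cfull21
        (fun i a b => (hfib i).2.2 a b)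
    refine ⟨?_, full12, full21⟩
    intro x y
    constructor
    · rintro ⟨e1, e2⟩
      obtain ⟨i, a⟩ := x; obtain ⟨j, b⟩ := y
      have hij : i = j := (Cdiag i j).mp
        ⟨(crel_iff p hid hθ₁ i j).mpr (theta_pe p hid hθ₁ e1),
         (crel_iff p hid hθ₂ i j).mpr (theta_pe p hid hθ₂ e2)⟩
      subst hij
      have hab : a = b := ((hfib i).1 a b).mp ⟨e1, e2⟩
      rw [hab]
    · rintro rfl
      exact ⟨hθ₁.1.refl _, hθ₂.1.refl _⟩
end

section
/- Let A be the Płonka sum of a semilattice direct system of groups, let B be a group, fix i ∈ I, and let g : G i →* B be a group homomorphism. Define h : A → WithZero B by h ⟨j,a⟩ = ↑(g (p_{j,i}(a))) if j ≤ i, and h ⟨j,a⟩ = 0 otherwise. Then h extends g (h ⟨i,a⟩ = ↑(g a) for a ∈ G i) and h is a homomorphism, i.e. h (x · y) = h x · h y and h (x⁻¹) = (h x)⁻¹ for all x, y ∈ A, where WithZero B carries its group-with-zero structure (the coerced multiplication of B with 0 absorbing, and 0⁻¹ = 0). -/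
/-! Płonka sum of a semilattice direct system of groups.

`I` is a join-semilattice, `G i` are groups, and `p i j h : G i →* G j` (for `h : i ≤ j`)
are the transition homomorphisms. The Płonka sum is the sigma type `Σ i, G i` with
multiplication `⟨i,a⟩·⟨j,b⟩ = ⟨i⊔j, p_{i,i⊔j}(a) · p_{j,i⊔j}(b)⟩` and inversion
`⟨i,a⟩⁻¹ = ⟨i,a⁻¹⟩` (a Clifford semigroup). -/

variable {I : Type*} [SemilatticeSup I] {G : I → Type*} [∀ i, Group (G i)]

open scoped Classical in
/-- The extension of a homomorphism `g : G i →* B` to the whole Płonka sum, with values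
in `B` with an absorbing zero adjoined (the algebra `B*`): `h ⟨j,a⟩ = g (p_{j,i}(a))` if
`j ≤ i`, and `h ⟨j,a⟩ = 0` otherwise. -/
noncomputable def hext (p : ∀ i j : I, i ≤ j → (G i →* G j)) {B : Type*} [Group B]
    (i : I) (g : G i →* B) (x : Σ j, G j) : WithZero B :=
  if h : x.1 ≤ i then ((g (p x.1 i h x.2) : B) : WithZero B) else 0

/-- The extension lemma: `hext p i g` extends `g` and is a homomorphism from the Płonka
sum to `B*` (i.e. `WithZero B` with its group-with-zero structure). -/
theorem hext_extends_and_is_hom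
    (p : ∀ i j : I, i ≤ j → (G i →* G j))
    (hid : ∀ (i : I) (h : i ≤ i) (a : G i), p i i h a = a)
    (hcomp : ∀ (i j k : I) (hij : i ≤ j) (hjk : j ≤ k) (a : G i),
      p j k hjk (p i j hij a) = p i k (hij.trans hjk) a)
    {B : Type*} [Group B] (i : I) (g : G i →* B) :
    (∀ a : G i, hext p i g ⟨i, a⟩ = ((g a : B) : WithZero B)) ∧
    (∀ x y : Σ j, G j, hext p i g (pmul p x y) = hext p i g x * hext p i g y) ∧
    (∀ x : Σ j, G j, hext p i g (pinv x) = (hext p i g x)⁻¹) := by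
  classical
  refine ⟨fun a => ?_, fun x y => ?_, fun x => ?_⟩
  · simp [hext, hid]
  · rcases x with ⟨j, a⟩; rcases y with ⟨k, b⟩
    by_cases hj : j ≤ i <;> by_cases hk : k ≤ i
    · have hs : j ⊔ k ≤ i := sup_le hj hk
      show hext p i g ⟨j ⊔ k, p j (j ⊔ k) le_sup_left a * p k (j ⊔ k) le_sup_right b⟩ = _
      simp only [hext, pmul, hs, hj, hk, dif_pos]
      rw [map_mul, map_mul, hcomp, hcomp]
      push_cast
      ring_nf
    · have hs : ¬ j ⊔ k ≤ i := fun h => hk (le_sup_right.trans h)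
      simp [hext, pmul, hs, hk]
    · have hs : ¬ j ⊔ k ≤ i := fun h => hj (le_sup_left.trans h)
      simp [hext, pmul, hs, hj]
    · have hs : ¬ j ⊔ k ≤ i := fun h => hj (le_sup_left.trans h)
      simp [hext, pmul, hs, hj]
  · rcases x with ⟨j, a⟩
    by_cases hj : j ≤ i
    · show hext p i g ⟨j, a⁻¹⟩ = _
      simp [hext, pinv, hj, ← WithZero.coe_inv]
    · simp [hext, pinv, hj]
end
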